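/- arXiv:1601.01857 — 9 statements merged into one kernel-verified Lean document; each statement's English description precedes it below -/
import Mathlib

section
/- Let n ≥ 1 and let W = S_{n+1} be the Weyl group of the root system A_n. Let H ≤ W be the subgroup generated by the transposition s = (1 2), and for g ∈ W let F(g) denote the number of left cosets xH of H in W such that g·xH = xH. Then for every g ∈ W one has (n+1)!·[g = id] + n·F(g) = (n+2)!/2 if g = id, = n! if g is a transposition, and = 0 otherwise. (Equivalently: the total cohomology H*(T_{A_n}) is the W-representation Reg_W + n·Ind_H^W(Triv_H), since the left-hand side is the character of Reg_W ⊕ n·Ind_H^W(Triv_H) and the right-hand side is the total character of H*(T_{A_n}).) -/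
open scoped Classical

-- auxiliary: cardinality of permutations fixing 0 and 1
lemma aux_card_fix (k : ℕ) :
    Nat.card {x : Equiv.Perm (Fin (k + 2)) // x 0 = 0 ∧ x 1 = 1} = Nat.factorial k := by
  classical
  let p : Fin (k + 2) → Prop := fun i => ¬(i = 0 ∨ i = 1)
  have e1 : Equiv.Perm (Subtype p) ≃ {f : Equiv.Perm (Fin (k+2)) // ∀ a, ¬ p a → f a = a} :=
    Equiv.Perm.subtypeEquivSubtypePerm p
  have e2 : {f : Equiv.Perm (Fin (k+2)) // ∀ a, ¬ p a → f a = a} ≃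
      {x : Equiv.Perm (Fin (k + 2)) // x 0 = 0 ∧ x 1 = 1} := by
    apply Equiv.subtypeEquivRight
    intro f
    constructor
    · intro h
      exact ⟨h 0 (by simp [p]), h 1 (by simp [p])⟩
    · rintro ⟨h0, h1⟩ a ha
      rcases not_not.mp ha with rfl | rfl
      · exact h0
      · exact h1
  have hc : Nat.card {x : Equiv.Perm (Fin (k + 2)) // x 0 = 0 ∧ x 1 = 1} =
      Nat.card (Equiv.Perm (Subtype p)) := Nat.card_congr (e1.trans e2).symm
  rw [hc, Nat.card_eq_fintype_card, Fintype.card_perm]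
  congr 1
  have hco : Fintype.card (Subtype p) = Fintype.card (Fin (k+2)) - Fintype.card {i : Fin (k+2) // i = 0 ∨ i = 1} := by
    convert Fintype.card_subtype_compl (fun i : Fin (k+2) => i = 0 ∨ i = 1) using 2
  rw [hco, Fintype.card_fin]
  have h2 : Fintype.card {i : Fin (k+2) // i = 0 ∨ i = 1} = 2 := by
    rw [Fintype.card_subtype]
    have : (Finset.univ.filter (fun i : Fin (k+2) => i = 0 ∨ i = 1)) = {0, 1} := by
      ext i; simp [Finset.mem_filter, Finset.mem_insert]
    rw [this]
    rw [Finset.card_insert_of_notMem (by simp), Finset.card_singleton]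
  rw [h2]
  omega

/-- The total cohomology of the complement of the toric arrangement associated to `Aₙ`
is the Weyl-group representation `Reg_W + n · Ind_H^W(Triv_H)`, where `W = S_{n+1}` and
`H = ⟨(1 2)⟩`, expressed at the level of characters: the character of
`Reg_W ⊕ n · Ind_H^W(Triv_H)` takes the value `(n+2)!/2` at the identity, `n!` at
transpositions and `0` elsewhere. Here `F g` is the number of left cosets of `H`
fixed by left multiplication by `g`, i.e. the character of `Ind_H^W(Triv_H)` at `g`. -/
theorem stmt_0 (n : ℕ) (hn : 1 ≤ n)
    (H : Subgroup (Equiv.Perm (Fin (n + 1))))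
    (hH : H = Subgroup.closure {Equiv.swap (0 : Fin (n + 1)) (1 : Fin (n + 1))})
    (F : Equiv.Perm (Fin (n + 1)) → ℕ)
    (hF : ∀ g, F g = Nat.card {c : Equiv.Perm (Fin (n + 1)) ⧸ H // g • c = c})
    (g : Equiv.Perm (Fin (n + 1))) :
    (if g = 1 then Nat.factorial (n + 1) else 0) + n * F g =
      if g = 1 then Nat.factorial (n + 2) / 2
      else if g.IsSwap then Nat.factorial n else 0 := by
  classical
  set s : Equiv.Perm (Fin (n + 1)) := Equiv.swap 0 1 with hsdef
  have h01 : (0 : Fin (n + 1)) ≠ 1 := by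
    intro h
    have h2 := congrArg Fin.val h
    rw [Fin.val_zero, Fin.val_one'] at h2
    rw [Nat.mod_eq_of_lt (by omega)] at h2
    exact absurd h2 (by norm_num)
  have hs1 : s ≠ 1 := by
    intro h
    have h2 : s 0 = (0 : Fin (n+1)) := by rw [h]; rfl
    rw [hsdef, Equiv.swap_apply_left] at h2
    exact h01 h2.symm
  have hss : s * s = 1 := Equiv.swap_mul_self 0 1
  have hmem : ∀ x, x ∈ H ↔ x = 1 ∨ x = s := by
    intro x
    rw [hH, Subgroup.mem_closure_singleton]
    constructor
    · rintro ⟨k, rfl⟩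
      have h2 : s ^ (2 : ℤ) = 1 := by
        rw [show (2:ℤ) = 1 + 1 by norm_num, zpow_add, zpow_one, hss]
      rcases Int.even_or_odd k with ⟨m, rfl⟩ | ⟨m, rfl⟩
      · left
        rw [show m + m = 2 * m by ring, zpow_mul, h2, one_zpow]
      · right
        rw [show 2 * m + 1 = m + m + 1 by ring, show m + m = 2 * m by ring,
          zpow_add, zpow_mul, h2, one_zpow, one_mul, zpow_one]
    · rintro (rfl | rfl)
      · exact ⟨0, rfl⟩
      · exact ⟨1, zpow_one s⟩
  have hsH : s ∈ H := (hmem s).mpr (Or.inr rfl)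
  -- fixed point characterization
  have hfix : ∀ (x gg : Equiv.Perm (Fin (n + 1))),
      (gg • (QuotientGroup.mk x : Equiv.Perm (Fin (n + 1)) ⧸ H) = QuotientGroup.mk x) ↔
        (x⁻¹ * gg * x = 1 ∨ x⁻¹ * gg * x = s) := by
    intro x gg
    rw [MulAction.Quotient.smul_mk, QuotientGroup.eq]
    have heq : (gg • x)⁻¹ * x = (x⁻¹ * gg * x)⁻¹ := by
      simp [smul_eq_mul, mul_assoc]
    rw [heq, H.inv_mem_iff, hmem]
  by_cases hg1 : g = 1
  · subst hg1
    rw [if_pos rfl, if_pos rfl]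
    -- F 1 = card of quotient
    have hF1 : F 1 = Nat.card (Equiv.Perm (Fin (n + 1)) ⧸ H) := by
      rw [hF]
      exact Nat.card_congr (Equiv.subtypeUnivEquiv (fun c => one_smul _ c))
    have hcardH : Nat.card H = 2 := by
      have hzp : H = Subgroup.zpowers s := by
        rw [hH]; exact (Subgroup.zpowers_eq_closure s).symm
      rw [hzp, Nat.card_zpowers]
      exact orderOf_eq_prime (by rw [pow_two, hss]) hs1
    have hlag := Subgroup.card_eq_card_quotient_mul_card_subgroup H
    rw [hcardH, Nat.card_eq_fintype_card, Fintype.card_perm, Fintype.card_fin] at hlag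
    rw [hF1]
    set Q := Nat.card (Equiv.Perm (Fin (n + 1)) ⧸ H) with hQ
    rw [Nat.factorial_succ (n+1), hlag]
    rw [show (n + 2) * (Q * 2) = ((n + 2) * Q) * 2 by ring, Nat.mul_div_cancel _ (by norm_num)]
    ring
  · rw [if_neg hg1, if_neg hg1]
    by_cases hsw : g.IsSwap
    · rw [if_pos hsw]
      obtain ⟨a, b, hab, hgab⟩ := hsw
      -- F g = (n-1)!
      obtain ⟨m, rfl⟩ : ∃ m, n = m + 1 := ⟨n - 1, by omega⟩
      -- construct y0 with y0 0 = a, y0 1 = b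
      set c : Fin (m + 2) := Equiv.swap 0 a b with hc
      have hcne : c ≠ 0 := by
        intro h
        have h3 : Equiv.swap (0 : Fin (m+2)) a b = Equiv.swap 0 a a := by
          rw [Equiv.swap_apply_right, ← hc]; exact h
        exact hab ((Equiv.swap 0 a).injective h3).symm
      set y0 : Equiv.Perm (Fin (m + 2)) := Equiv.swap 0 a * Equiv.swap 1 c with hy0
      have hy00 : y0 0 = a := by
        rw [hy0, Equiv.Perm.mul_apply,
          Equiv.swap_apply_of_ne_of_ne h01 (Ne.symm hcne), Equiv.swap_apply_left]
      have hy01 : y0 1 = b := by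
        rw [hy0, Equiv.Perm.mul_apply, Equiv.swap_apply_left, hc, Equiv.swap_apply_self]
      -- the bijection between fixed cosets and perms sending 0 ↦ a, 1 ↦ b
      set B := {x : Equiv.Perm (Fin (m + 2)) // x 0 = a ∧ x 1 = b} with hB
      have key : ∀ x : Equiv.Perm (Fin (m+2)), (x 0 = a ∧ x 1 = b) → x⁻¹ * g * x = s := by
        rintro x ⟨hx0, hx1⟩
        have : g = x * s * x⁻¹ := by
          rw [hgab, ← hx0, ← hx1, hsdef, Equiv.swap_apply_apply]
        rw [this]
        group
      let φ : B → {cc : Equiv.Perm (Fin (m + 2)) ⧸ H // g • cc = cc} := fun x =>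
        ⟨QuotientGroup.mk x.1, (hfix x.1 g).mpr (Or.inr (key x.1 x.2))⟩
      have hinj : Function.Injective φ := by
        rintro ⟨x, hx0, hx1⟩ ⟨y, hy0', hy1'⟩ hxy
        have h1 : (QuotientGroup.mk x : Equiv.Perm (Fin (m + 2)) ⧸ H) = QuotientGroup.mk y :=
          congrArg Subtype.val hxy
        rw [QuotientGroup.eq, hmem] at h1
        rcases h1 with h1 | h1
        · have : x = y := by
            have := congrArg (fun z => x * z) h1
            simpa [mul_assoc] using this.symm
          exact Subtype.ext this
        · exfalso
          have hy : y = x * s := by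
            have := congrArg (fun z => x * z) h1
            simpa [mul_assoc] using this
          have : y 0 = x 1 := by
            rw [hy, Equiv.Perm.mul_apply, hsdef, Equiv.swap_apply_left]
          rw [hy0', hx1] at this
          exact hab this
      have hsurj : Function.Surjective φ := by
        rintro ⟨cc, hcc⟩
        obtain ⟨x, rfl⟩ := QuotientGroup.mk_surjective cc
        rcases (hfix x g).mp hcc with h | h
        · exfalso
          apply hg1
          have := congrArg (fun z => x * z * x⁻¹) h
          simpa [mul_assoc] using this
        · -- g = swap (x 0) (x 1)
          have hg : g = Equiv.swap (x 0) (x 1) := by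
            have : g = x * s * x⁻¹ := by
              have := congrArg (fun z => x * z * x⁻¹) h
              simpa [mul_assoc] using this
            rw [this, hsdef, ← Equiv.swap_apply_apply]
          have hx01 : x 0 ≠ x 1 := fun hh => h01 (x.injective hh)
          have happ : Equiv.swap a b (x 0) = x 1 := by
            rw [hgab] at hg
            rw [hg, Equiv.swap_apply_left]
          by_cases h0a : x 0 = a
          · have hx1b : x 1 = b := by
              rw [h0a, Equiv.swap_apply_left] at happ
              exact happ.symm
            exact ⟨⟨x, h0a, hx1b⟩, rfl⟩
          · by_cases h0b : x 0 = b
            · have hx1a : x 1 = a := by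
                rw [h0b, Equiv.swap_apply_right] at happ
                exact happ.symm
              refine ⟨⟨x * s, ?_, ?_⟩, ?_⟩
              · rw [Equiv.Perm.mul_apply, hsdef, Equiv.swap_apply_left, hx1a]
              · rw [Equiv.Perm.mul_apply, hsdef, Equiv.swap_apply_right, h0b]
              · simp only [φ]
                exact Subtype.ext (QuotientGroup.mk_mul_of_mem x hsH)
            · exfalso
              rw [Equiv.swap_apply_of_ne_of_ne h0a h0b] at happ
              exact hx01 happ
      have hFg : F g = Nat.card B := by
        rw [hF]
        exact (Nat.card_congr (Equiv.ofBijective φ ⟨hinj, hsurj⟩)).symm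
      -- card B = m!
      have hBcard : Nat.card B = Nat.factorial m := by
        have e : B ≃ {x : Equiv.Perm (Fin (m + 2)) // x 0 = 0 ∧ x 1 = 1} :=
          { toFun := fun x => ⟨y0⁻¹ * x.1, by
              obtain ⟨x, hx0, hx1⟩ := x
              constructor
              · simp only [Equiv.Perm.mul_apply, hx0, ← hy00, Equiv.Perm.inv_def, Equiv.symm_apply_apply]
              · simp only [Equiv.Perm.mul_apply, hx1, ← hy01, Equiv.Perm.inv_def, Equiv.symm_apply_apply]⟩
            invFun := fun x => ⟨y0 * x.1, by
              obtain ⟨x, hx0, hx1⟩ := x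
              constructor
              · simp only [Equiv.Perm.mul_apply, hx0, hy00]
              · simp only [Equiv.Perm.mul_apply, hx1, hy01]⟩
            left_inv := fun x => Subtype.ext (by simp [mul_assoc])
            right_inv := fun x => Subtype.ext (by simp [mul_assoc]) }
        rw [Nat.card_congr e]
        exact aux_card_fix m
      rw [hFg, hBcard, Nat.factorial_succ]
      ring
    · rw [if_neg hsw]
      have hempty : IsEmpty {cc : Equiv.Perm (Fin (n + 1)) ⧸ H // g • cc = cc} := by
        constructor
        rintro ⟨cc, hcc⟩
        obtain ⟨x, rfl⟩ := QuotientGroup.mk_surjective cc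
        rcases (hfix x g).mp hcc with h | h
        · apply hg1
          have := congrArg (fun z => x * z * x⁻¹) h
          simpa [mul_assoc] using this
        · apply hsw
          have hg : g = x * s * x⁻¹ := by
            have := congrArg (fun z => x * z * x⁻¹) h
            simpa [mul_assoc] using this
          refine ⟨x 0, x 1, fun hh => h01 (x.injective hh), ?_⟩
          rw [hg, hsdef, ← Equiv.swap_apply_apply]
      rw [hF, @Nat.card_of_isEmpty _ hempty]
      ring
end

section
/- For every n ≥ 1, the polynomial identity ∏_{i=1}^{n} (1 + (i+1)·t) = ∑_{r=0}^{n} e_r(1, 2, …, n) · t^r · (1+t)^{n−r} holds in ℤ[t], where e_r(1, …, n) = ∑_{I ⊆ {1,…,n}, |I| = r} ∏_{i ∈ I} i is the r-th elementary symmetric polynomial evaluated at 1, 2, …, n. (This identity is the content of the formula P(T_{A_n}, t) = ∏_{i=1}^n (1 + (i+1)t) for the Poincaré polynomial of the complement of the toric arrangement associated to A_n, given the Orlik–Solomon-type expansion P(T_{A_n}, t) = ∑_{r=0}^n e_r(1,…,n) t^r (1+t)^{n−r}.) -/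
open Polynomial Finset

/-- The polynomial identity `∏_{i=1}^n (1 + (i+1)t) = ∑_{r=0}^n e_r(1,…,n) tʳ (1+t)^{n-r}`
in `ℤ[t]`, where `e_r(1,…,n)` is the `r`-th elementary symmetric polynomial evaluated at
`1, 2, …, n`.  This is the formula for the Poincaré polynomial of the complement of the
toric arrangement associated to the root system `Aₙ`. -/
theorem stmt_1 (n : ℕ) (hn : 1 ≤ n)
    (e : ℕ → ℤ)
    (he : ∀ r, e r = ∑ I ∈ Finset.powersetCard r (Finset.Icc 1 n), ∏ i ∈ I, (i : ℤ)) :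
    ∏ i ∈ Finset.Icc 1 n, (1 + Polynomial.C ((i : ℤ) + 1) * Polynomial.X) =
      ∑ r ∈ Finset.range (n + 1),
        Polynomial.C (e r) * Polynomial.X ^ r * (1 + Polynomial.X) ^ (n - r) := by
  have hcard : (Finset.Icc 1 n).card = n := by simp
  have h1 : ∀ i ∈ Finset.Icc 1 n,
      (1 : ℤ[X]) + C ((i : ℤ) + 1) * X = (C (i : ℤ) * X) + (1 + X) := by
    intro i _; rw [Polynomial.C_add, Polynomial.C_1]; ring
  rw [Finset.prod_congr rfl h1, Finset.prod_add, Finset.sum_powerset, hcard]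
  refine Finset.sum_congr rfl fun r hr => ?_
  rw [he r, map_sum, Finset.sum_mul, Finset.sum_mul]
  refine Finset.sum_congr rfl fun I hI => ?_
  rw [Finset.mem_powersetCard] at hI
  rw [Finset.prod_mul_distrib, Finset.prod_const, Finset.prod_const, hI.2,
    Finset.card_sdiff_of_subset hI.1, hcard, hI.2]
  simp [map_prod]
end

section
/- Let V be a real inner product space, let α ∈ V be nonzero, and let M be an additive subgroup of V containing α such that the reflection r_α maps M into M and such that 2(α·v)/(α·α) is an integer for every v ∈ M (as holds when M is the ℤ-span of a crystallographic root system Φ containing α). Then T^{r_α} = T_α if and only if there exists v ∈ M such that 2(α·v)/(α·α) = 1. -/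
/-- Lemma 1 of the paper: let `V` be a real inner product space, `α ∈ V` nonzero, and `M`
an additive subgroup of `V` containing `α`, stable under the reflection
`r(v) = v - (2⟪α,v⟫/⟪α,α⟫)·α`, and such that `2⟪α,v⟫/⟪α,α⟫ ∈ ℤ` for all `v ∈ M`.
Then the subtori `T^{r_α} = {χ : M → ℂˣ | χ ∘ r = χ}` and `T_α = {χ | χ(α) = 1}` of
`T = Hom(M, ℂˣ)` coincide if and only if `2⟪α,v⟫/⟪α,α⟫ = 1` for some `v ∈ M`. -/
theorem stmt_3 {V : Type*} [NormedAddCommGroup V] [InnerProductSpace ℝ V]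
    (α : V) (hα : α ≠ 0)
    (M : AddSubgroup V) (hαM : α ∈ M)
    (r : V → V)
    (hr : ∀ v : V, r v = v - ((2 * inner ℝ α v / inner ℝ α α : ℝ)) • α)
    (hrM : ∀ v ∈ M, r v ∈ M)
    (hint : ∀ v ∈ M, ∃ k : ℤ, (2 * inner ℝ α v / inner ℝ α α : ℝ) = (k : ℝ)) :
    ({χ : AddChar M ℂˣ | ∀ v : M, χ ⟨r ↑v, hrM ↑v v.2⟩ = χ v} =
        {χ : AddChar M ℂˣ | χ ⟨α, hαM⟩ = 1}) ↔
      ∃ v ∈ M, (2 * inner ℝ α v / inner ℝ α α : ℝ) = 1 := by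
  have haa : (inner ℝ α α : ℝ) ≠ 0 := fun h => hα (inner_self_eq_zero.mp h)
  set c : V → ℝ := fun v => 2 * inner ℝ α v / inner ℝ α α with hc
  have hf : ∀ v : M, ∃ k : ℤ, c (v : V) = (k : ℝ) := fun v => hint v v.2
  choose f hfspec using hf
  have hcα : c α = 2 := by
    simp only [hc]
    field_simp
  have hfα : f ⟨α, hαM⟩ = 2 := by
    have := hfspec ⟨α, hαM⟩
    rw [hcα] at this
    exact_mod_cast this.symm
  have hcr : ∀ v : V, c (r v) = - c v := by
    intro v
    simp only [hc, hr v, inner_sub_right, real_inner_smul_right]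
    field_simp
    ring
  have hfr : ∀ v : M, f ⟨r ↑v, hrM ↑v v.2⟩ = - f v := by
    intro v
    have h1 := hfspec ⟨r ↑v, hrM ↑v v.2⟩
    have h2 := hfspec v
    have := hcr (v : V)
    rw [h1, h2] at this
    exact_mod_cast this
  have hkey : ∀ v : M, (⟨r ↑v, hrM ↑v v.2⟩ : M) = v - (f v) • (⟨α, hαM⟩ : M) := by
    intro v
    apply Subtype.ext
    push_cast
    rw [hr ↑v]
    show (v : V) - c (v : V) • α = (v : V) - (f v : ℤ) • α
    rw [hfspec v, Int.cast_smul_eq_zsmul]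
  constructor
  · -- equality of sets → ∃ v, c v = 1
    intro hset
    by_contra hno
    push_neg at hno
    have heven : ∀ v : M, 2 ∣ f v := by
      intro v
      by_contra hodd
      have hoddf : Odd (f v) := Int.odd_iff.mpr (Int.two_dvd_ne_zero.mp hodd)
      obtain ⟨m, hm⟩ := hoddf
      set w : M := v - m • ⟨α, hαM⟩ with hw
      have hcw : c (w : V) = 1 := by
        have hwcoe : (w : V) = (v : V) - m • α := by push_cast [hw]; ring_nf
        have hstep : c (w : V) = c (v : V) - m * c α := by
          rw [hwcoe]
          simp only [hc, inner_sub_right]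
          rw [← Int.cast_smul_eq_zsmul ℝ m α, real_inner_smul_right]
          field_simp
        rw [hstep, hcα, hfspec v, hm]
        push_cast
        ring
      exact hno (w : V) w.2 hcw
    have hI : (Complex.I : ℂ) * (-Complex.I) = 1 := by
      rw [mul_neg, Complex.I_mul_I, neg_neg]
    set u : ℂˣ := ⟨Complex.I, -Complex.I, hI, by rw [neg_mul, mul_comm, ← mul_neg, hI]⟩ with hu
    have hu2 : u ^ (2 : ℤ) ≠ 1 := by
      intro h
      have h' : ((u : ℂ)) ^ (2 : ℤ) = 1 := by
        rw [← Units.val_zpow_eq_zpow_val, h, Units.val_one]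
      rw [show ((2:ℤ)) = ((2:ℕ):ℤ) from rfl, zpow_natCast] at h'
      rw [show (u : ℂ) = Complex.I from rfl, Complex.I_sq] at h'
      norm_num at h'
    have hu4 : u ^ (4 : ℤ) = 1 := by
      apply Units.ext
      rw [Units.val_zpow_eq_zpow_val]
      rw [show ((4:ℤ)) = ((4:ℕ):ℤ) from rfl, zpow_natCast]
      push_cast
      exact Complex.I_pow_four
    set χ : AddChar M ℂˣ :=
      { toFun := fun v => u ^ (f v)
        map_zero_eq_one' := by
          have h0 : f 0 = 0 := by
            have := hfspec 0
            simp only [hc, ZeroMemClass.coe_zero, inner_zero_right, mul_zero, zero_div] at this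
            exact_mod_cast this.symm
          simp [h0]
        map_add_eq_mul' := by
          intro a b
          have hab : f (a + b) = f a + f b := by
            have h1 := hfspec (a + b)
            have hadd : c ((a : V) + b) = c a + c b := by
              simp only [hc, inner_add_right]
              field_simp
            rw [show ((a + b : M) : V) = (a : V) + b from rfl] at h1
            rw [hadd, hfspec a, hfspec b] at h1
            exact_mod_cast h1.symm
          simp [hab, zpow_add] } with hχ
    have hmem : χ ∈ {χ : AddChar M ℂˣ | ∀ v : M, χ ⟨r ↑v, hrM ↑v v.2⟩ = χ v} := by
      intro v
      show u ^ (f ⟨r ↑v, hrM ↑v v.2⟩) = u ^ (f v)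
      rw [hfr v]
      obtain ⟨k, hk⟩ := heven v
      have h4 : u ^ ((4 : ℤ) * k) = 1 := by rw [zpow_mul, hu4, one_zpow]
      rw [hk, show -(2 * k) = 2 * k + -((4:ℤ) * k) by ring, zpow_add, zpow_neg, h4, inv_one,
        mul_one]
    rw [hset] at hmem
    have hval : χ ⟨α, hαM⟩ = u ^ (2 : ℤ) := by
      show u ^ (f ⟨α, hαM⟩) = u ^ (2 : ℤ)
      rw [hfα]
    rw [hmem] at hval
    exact hu2 hval.symm
  · rintro ⟨v0, hv0M, hv0⟩
    ext χ
    simp only [Set.mem_setOf_eq]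
    constructor
    · intro hχ
      have hf0 : f ⟨v0, hv0M⟩ = 1 := by
        have := hfspec ⟨v0, hv0M⟩
        rw [show c v0 = 1 from hv0] at this
        exact_mod_cast this.symm
      have := hχ ⟨v0, hv0M⟩
      rw [hkey ⟨v0, hv0M⟩, hf0, one_smul, AddChar.map_sub_eq_div] at this
      exact div_eq_self.mp this
    · intro hχ v
      rw [hkey v, AddChar.map_sub_eq_div, AddChar.map_zsmul_eq_zpow, hχ, one_zpow, div_one]
end

section
/- Let n ≥ 2, let M = {v ∈ ℤ^{n+1} : ∑ v_i = 0} be the root lattice of A_n, and let g ∈ S_{n+1} be a permutation having a cycle of length at least 3 (i.e. some point whose g-orbit has size ≥ 3), acting on M by permuting coordinates. Then every group homomorphism χ : M → ℂˣ satisfying χ(g·v) = conj(χ(v)) for all v ∈ M has χ(e_i − e_j) = 1 for some i ≠ j. In other words, the fixed-point locus T_{A_n}^{ḡ} of ḡ on the complement T_{A_n} is empty. -/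
/-- Lemma (no `ḡ`-fixed points for long cycles): let `M = {v ∈ ℤ^{n+1} : ∑ vᵢ = 0}` be the
root lattice of `Aₙ` (`n ≥ 2`) and let `g ∈ S_{n+1}` have a cycle of length at least 3
(some point whose `g`-orbit has size `≥ 3`), acting on `M` by permuting coordinates
(`(g·v)ᵢ = v_{g⁻¹(i)}`).  Then every character `χ : M → ℂˣ` with `χ(g·v) = conj(χ(v))`
for all `v ∈ M` satisfies `χ(eᵢ - eⱼ) = 1` for some `i ≠ j`; that is, the fixed-point
locus `T_{Aₙ}^{ḡ}` of `ḡ` on the complement `T_{Aₙ}` is empty. -/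
theorem stmt_7 (n : ℕ) (hn : 2 ≤ n)
    (M : AddSubgroup (Fin (n + 1) → ℤ))
    (hM : ∀ v, v ∈ M ↔ ∑ l, v l = 0)
    (g : Equiv.Perm (Fin (n + 1)))
    (hg : ∃ x : Fin (n + 1), 3 ≤ Set.ncard {y : Fin (n + 1) | ∃ k : ℤ, (g ^ k) x = y})
    (act : (Fin (n + 1) → ℤ) → (Fin (n + 1) → ℤ))
    (hact : ∀ v i, act v i = v (g⁻¹ i))
    (hactM : ∀ v ∈ M, act v ∈ M)
    (hroot : ∀ i j : Fin (n + 1), (Pi.single i 1 - Pi.single j 1 : Fin (n + 1) → ℤ) ∈ M) :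
    ∀ χ : AddChar M ℂˣ,
      (∀ v : M, ((χ ⟨act ↑v, hactM ↑v v.2⟩ : ℂˣ) : ℂ) = starRingEnd ℂ ((χ v : ℂˣ) : ℂ)) →
      ∃ i j : Fin (n + 1), i ≠ j ∧ χ ⟨Pi.single i 1 - Pi.single j 1, hroot i j⟩ = 1 := by
  intro χ hχ
  obtain ⟨a, ha⟩ := hg
  set r : Fin (n + 1) → Fin (n + 1) → M :=
    fun i j => ⟨Pi.single i 1 - Pi.single j 1, hroot i j⟩ with hrdef
  set z : Fin (n + 1) → Fin (n + 1) → ℂ := fun i j => ((χ (r i j) : ℂˣ) : ℂ) with hzdef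
  -- multiplicativity
  have hmul : ∀ i j k, z i j * z j k = z i k := by
    intro i j k
    have hadd : r i j + r j k = r i k := by
      apply Subtype.ext
      show (Pi.single i 1 - Pi.single j 1) + (Pi.single j 1 - Pi.single k 1)
        = Pi.single i 1 - Pi.single k 1
      abel
    have := congrArg χ hadd
    rw [AddChar.map_add_eq_mul] at this
    simp only [hzdef]
    rw [← this]
    push_cast
    ring
  have hzero : ∀ i, z i i = 1 := by
    intro i
    have : r i i = 0 := by
      apply Subtype.ext
      show Pi.single i 1 - Pi.single i 1 = 0
      simp
    simp only [hzdef, this, AddChar.map_zero_eq_one, Units.val_one]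
  have hconj : ∀ i j, z (g i) (g j) = starRingEnd ℂ (z i j) := by
    intro i j
    have hv : act ((r i j : M) : Fin (n + 1) → ℤ) = Pi.single (g i) 1 - Pi.single (g j) 1 := by
      funext l
      rw [hact]
      show (Pi.single i 1 - Pi.single j 1 : Fin (n + 1) → ℤ) (g⁻¹ l)
          = (Pi.single (g i) 1 - Pi.single (g j) 1 : Fin (n + 1) → ℤ) l
      simp only [Pi.sub_apply, Pi.single_apply]
      have h1 : (g⁻¹ l = i) ↔ (l = g i) := by
        constructor
        · intro h; rw [← h]; simp
        · intro h; rw [h]; simp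
      have h2 : (g⁻¹ l = j) ↔ (l = g j) := by
        constructor
        · intro h; rw [← h]; simp
        · intro h; rw [h]; simp
      rw [if_congr h1 rfl rfl, if_congr h2 rfl rfl]
    have he : (⟨act ((r i j : M) : Fin (n + 1) → ℤ),
        hactM _ (r i j).2⟩ : M) = r (g i) (g j) := Subtype.ext hv
    have h2 := hχ (r i j)
    rw [he] at h2
    exact h2
  -- telescoping product
  have tel : ∀ (b : Fin (n + 1)) (N : ℕ),
      (∏ k ∈ Finset.range N, z ((g ^ k) b) ((g ^ (k + 1)) b)) = z b ((g ^ N) b) := by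
    intro b N
    induction N with
    | zero => simp [hzero b]
    | succ N ih => rw [Finset.prod_range_succ, ih, hmul]
  set c : Fin (n + 1) := g (g a) with hc
  set u : ℂ := z a (g a) with hu
  have hgac : z (g a) c = starRingEnd ℂ u := hconj a (g a)
  have hac : z a c = (Complex.normSq u : ℂ) := by
    calc z a c = z a (g a) * z (g a) c := (hmul a (g a) c).symm
      _ = u * starRingEnd ℂ u := by rw [hgac]
      _ = (Complex.normSq u : ℂ) := Complex.mul_conj u
  have hfix : ∀ k : ℕ, z ((g ^ k) a) ((g ^ k) c) = z a c := by
    intro k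
    induction k with
    | zero => simp
    | succ k ih =>
      have e1 : (g ^ (k + 1)) a = g ((g ^ k) a) := by
        rw [pow_succ']; rfl
      have e2 : (g ^ (k + 1)) c = g ((g ^ k) c) := by
        rw [pow_succ']; rfl
      rw [e1, e2, hconj, ih, hac, Complex.conj_ofReal]
  set m : ℕ := orderOf g with hmdef
  have hm1 : g ^ m = 1 := pow_orderOf_eq_one g
  have hmpos : 0 < m := orderOf_pos g
  have hprodone : (∏ k ∈ Finset.range m, z ((g ^ k) a) ((g ^ k) c)) = 1 := by
    have e1 : ∀ k : ℕ, (g ^ k) c = (g ^ (k + 1)) (g a) := by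
      intro k
      rw [hc, pow_succ]
      rfl
    have e2 : ∀ k : ℕ, (g ^ (k + 1)) a = (g ^ k) (g a) := by
      intro k
      rw [pow_succ]
      rfl
    have step : ∀ k ∈ Finset.range m, z ((g ^ k) a) ((g ^ k) c)
        = z ((g ^ k) a) ((g ^ (k + 1)) a) * z ((g ^ k) (g a)) ((g ^ (k + 1)) (g a)) := by
      intro k _
      rw [e1 k, ← hmul ((g ^ k) a) ((g ^ (k + 1)) a) ((g ^ (k + 1)) (g a)), e2 k]
    rw [Finset.prod_congr rfl step, Finset.prod_mul_distrib, tel a m, tel (g a) m, hm1]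
    simp [hzero]
  have hpow : (z a c) ^ m = 1 := by
    rw [← hprodone, Finset.prod_congr rfl (fun k _ => hfix k), Finset.prod_const,
      Finset.card_range]
  -- z a c is a nonnegative real with (z a c)^m = 1, hence z a c = 1
  have hreal : (Complex.normSq u : ℂ) ^ m = 1 := by rw [← hac]; exact hpow
  have hrealR : (Complex.normSq u) ^ m = 1 := by
    have := hreal
    rw [← Complex.ofReal_pow] at this
    exact_mod_cast this
  have hnormone : Complex.normSq u = 1 := by
    rcases lt_trichotomy (Complex.normSq u) 1 with h | h | h
    · exfalso
      have : (Complex.normSq u) ^ m < 1 :=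
        pow_lt_one₀ (Complex.normSq_nonneg u) h hmpos.ne'
      rw [hrealR] at this
      exact lt_irrefl 1 this
    · exact h
    · exfalso
      have : 1 < (Complex.normSq u) ^ m := one_lt_pow₀ h hmpos.ne'
      rw [hrealR] at this
      exact lt_irrefl 1 this
  have hzac : z a c = 1 := by rw [hac, hnormone, Complex.ofReal_one]
  -- a ≠ c from the orbit size hypothesis
  have hne : a ≠ c := by
    intro h
    have horb : {y : Fin (n + 1) | ∃ k : ℤ, (g ^ k) a = y} ⊆ {a, g a} := by
      rintro y ⟨k, hk⟩
      subst hk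
      induction k using Int.induction_on with
      | zero => simp
      | succ k ih =>
        have e : (g ^ ((k : ℤ) + 1)) a = g ((g ^ (k : ℤ)) a) := by
          rw [show ((k : ℤ) + 1) = 1 + (k : ℤ) from by ring, zpow_add, zpow_one]
          rfl
        rcases ih with h1 | h1
        · rw [e, h1]; right; rfl
        · rw [e, Set.mem_singleton_iff.mp h1, ← hc, ← h]; left; rfl
      | pred k ih =>
        have e : (g ^ (-(k : ℤ) - 1)) a = g⁻¹ ((g ^ (-(k : ℤ))) a) := by
          rw [show (-(k : ℤ) - 1) = -1 + -(k : ℤ) by ring, zpow_add, zpow_neg_one]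
          rfl
        rcases ih with h1 | h1
        · rw [e, h1]
          have : g⁻¹ a = g a := by
            conv_lhs => rw [h, hc]
            simp
          rw [this]; right; rfl
        · rw [e, Set.mem_singleton_iff.mp h1]
          simp
    have hle : Set.ncard {y : Fin (n + 1) | ∃ k : ℤ, (g ^ k) a = y} ≤ 2 := by
      have h1 := Set.ncard_le_ncard horb
        (Set.Finite.insert a (Set.finite_singleton (g a)))
      have h2 : Set.ncard ({a, g a} : Set (Fin (n + 1))) ≤ 2 := by
        have := Set.ncard_insert_le a ({g a} : Set (Fin (n + 1)))
        simpa using this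
      omega
    omega
  refine ⟨a, c, hne, ?_⟩
  have : ((χ (r a c) : ℂˣ) : ℂ) = 1 := hzac
  exact Units.ext this
end

section
/- Let n ≥ 2 and let M = {v ∈ ℤ^{n+1} : ∑ v_i = 0} be the root lattice of A_n, with S_{n+1} acting by permuting coordinates. Let g ∈ S_{n+1} have a cycle of length at least 3. Let L be a free ℤ-module of finite rank with an automorphism h : L → L, let Φ′ ⊆ L be a finite set, and suppose there is an injective additive homomorphism ι : M → L with h∘ι = ι∘g and ι(e_i − e_j) ∈ Φ′ for all i ≠ j. Then every group homomorphism χ : L → ℂˣ satisfying χ(h(w)) = conj(χ(w)) for all w ∈ L has χ(β) = 1 for some β ∈ Φ′. (This is the statement that if a root system Φ of rank n contains A_n as a subroot system and g is an element of the Weyl group of A_n of order greater than 2, then T_Φ^{ḡ} is empty.) -/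
/-- Corollary: let `Φ` be a root system of rank `n` containing `Aₙ` as a subroot system
(abstracted as: a finite set `Φ'` in a finitely generated free `ℤ`-module `L` with an
automorphism `h`, together with an injective embedding `ι` of the `Aₙ`-root lattice
`M = {v ∈ ℤ^{n+1} : ∑ vᵢ = 0}` intertwining `h` with the coordinate-permutation action of
`g ∈ S_{n+1}` and sending each root `eᵢ - eⱼ` into `Φ'`).  If `g` has a cycle of length at
least 3 (equivalently, `g` has order greater than 2 up to conjugacy considerations in the
paper), then every character `χ : L → ℂˣ` with `χ(h(w)) = conj(χ(w))` for all `w ∈ L`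
satisfies `χ(β) = 1` for some `β ∈ Φ'`; i.e. `T_Φ^{ḡ}` is empty. -/
theorem stmt_8 (n : ℕ) (hn : 2 ≤ n)
    (M : AddSubgroup (Fin (n + 1) → ℤ))
    (hM : ∀ v, v ∈ M ↔ ∑ l, v l = 0)
    (g : Equiv.Perm (Fin (n + 1)))
    (hg : ∃ x : Fin (n + 1), 3 ≤ Set.ncard {y : Fin (n + 1) | ∃ k : ℤ, (g ^ k) x = y})
    (act : (Fin (n + 1) → ℤ) → (Fin (n + 1) → ℤ))
    (hact : ∀ v i, act v i = v (g⁻¹ i))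
    (hactM : ∀ v ∈ M, act v ∈ M)
    (hroot : ∀ i j : Fin (n + 1), (Pi.single i 1 - Pi.single j 1 : Fin (n + 1) → ℤ) ∈ M)
    (L : Type*) [AddCommGroup L] [Module.Free ℤ L] [Module.Finite ℤ L]
    (h : L ≃+ L)
    (Φ' : Finset L)
    (ι : M →+ L) (hι : Function.Injective ι)
    (hcomm : ∀ v : M, h (ι v) = ι ⟨act ↑v, hactM ↑v v.2⟩)
    (hΦ' : ∀ i j : Fin (n + 1), i ≠ j →
      ι ⟨Pi.single i 1 - Pi.single j 1, hroot i j⟩ ∈ Φ') :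
    ∀ χ : AddChar L ℂˣ,
      (∀ w : L, ((χ (h w) : ℂˣ) : ℂ) = starRingEnd ℂ ((χ w : ℂˣ) : ℂ)) →
      ∃ β ∈ Φ', χ β = 1 := by
  intro χ hχ
  classical
  obtain ⟨x, hx⟩ := hg
  -- Step 1: x ≠ g (g x)
  have hx2 : x ≠ g (g x) := by
    intro hfix
    have hfix' : (g ^ 2) x = x := by
      rw [pow_two, Equiv.Perm.mul_apply, ← hfix]
    have hsub : {y : Fin (n + 1) | ∃ k : ℤ, (g ^ k) x = y} ⊆ {x, g x} := by
      rintro y ⟨k, rfl⟩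
      have hfixz : (g ^ (2:ℤ)) x = x := by
        rw [show ((2:ℤ)) = ((2:ℕ) : ℤ) by norm_num, zpow_natCast]; exact hfix'
      have hdec : (g ^ k) x = (g ^ (k % 2)) x := by
        conv_lhs => rw [← Int.emod_add_mul_ediv k 2]
        rw [zpow_add, Equiv.Perm.mul_apply, zpow_mul]
        congr 1
        exact Function.IsFixedPt.perm_zpow hfixz (k / 2)
      rcases Int.emod_two_eq_zero_or_one k with h0 | h1
      · left; rw [hdec, h0, zpow_zero, Equiv.Perm.one_apply]
      · right; rw [hdec, h1, zpow_one]; rfl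
    have hle := Set.ncard_le_ncard hsub (Set.toFinite _)
    have h2 : Set.ncard ({x, g x} : Set (Fin (n+1))) ≤ 2 := by
      apply le_trans (Set.ncard_insert_le _ _)
      simp [Set.ncard_singleton]
    omega
  -- Setup
  set mm : Fin (n+1) → Fin (n+1) → M := fun i j => ⟨Pi.single i 1 - Pi.single j 1, hroot i j⟩ with hmm
  set c : Fin (n+1) → Fin (n+1) → ℂ := fun i j => ((χ (ι (mm i j)) : ℂˣ) : ℂ) with hc
  have hadd : ∀ i j k, c i j * c j k = c i k := by
    intro i j k
    have : mm i j + mm j k = mm i k := by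
      apply Subtype.ext
      show (Pi.single i 1 - Pi.single j 1) + (Pi.single j 1 - Pi.single k 1)
          = (Pi.single i 1 - Pi.single k 1 : Fin (n+1) → ℤ)
      abel
    rw [hc]
    simp only [← this, map_add, AddChar.map_add_eq_mul, Units.val_mul]
  have hone : ∀ i, c i i = 1 := by
    intro i
    have : mm i i = 0 := by
      apply Subtype.ext
      show (Pi.single i 1 - Pi.single i 1 : Fin (n+1) → ℤ) = 0
      simp
    rw [hc]
    simp only [this, map_zero, AddChar.map_zero_eq_one, Units.val_one]
  have hconj : ∀ i j, c (g i) (g j) = starRingEnd ℂ (c i j) := by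
    intro i j
    have hmact : (⟨act ↑(mm i j), hactM _ (mm i j).2⟩ : M) = mm (g i) (g j) := by
      apply Subtype.ext
      show act (Pi.single i 1 - Pi.single j 1) = (Pi.single (g i) 1 - Pi.single (g j) 1 : Fin (n+1) → ℤ)
      funext l
      rw [hact]
      simp only [Pi.sub_apply, Pi.single_apply, Equiv.Perm.inv_eq_iff_eq]
    have := hχ (ι (mm i j))
    rw [hcomm, hmact] at this
    exact this
  set u : ℂ := c x (g x) with hu
  set v : ℂ := c x (g (g x)) with hv
  have hvval : v = u * starRingEnd ℂ u := by
    rw [hv, hu, ← hadd x (g x) (g (g x)), hconj]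
  have hvconj : starRingEnd ℂ v = v := by
    rw [hvval, map_mul, Complex.conj_conj, mul_comm]
  have hvfix : ∀ m : ℕ, c ((g ^ m) x) ((g ^ m) (g (g x))) = v := by
    intro m
    induction m with
    | zero => simp [hv]
    | succ m ih =>
      rw [pow_succ', Equiv.Perm.mul_apply, Equiv.Perm.mul_apply, hconj, ih, hvconj]
  have hpow : ∀ k : ℕ, c x ((g ^ (2 * k)) x) = v ^ k := by
    intro k
    induction k with
    | zero => simp [hone]
    | succ k ih =>
      have hstep : (g ^ (2 * (k+1))) x = (g ^ (2 * k)) (g (g x)) := by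
        rw [show 2 * (k+1) = 2 * k + 2 by ring, pow_add, Equiv.Perm.mul_apply,
          pow_two, Equiv.Perm.mul_apply]
      rw [hstep, ← hadd x ((g ^ (2*k)) x) ((g ^ (2*k)) (g (g x))), ih, hvfix, pow_succ]
  -- use k = orderOf g
  set o : ℕ := orderOf g with ho
  have hopos : 0 < o := orderOf_pos g
  have hgo : (g ^ (2 * o)) x = x := by
    rw [mul_comm, pow_mul, pow_orderOf_eq_one, one_pow, Equiv.Perm.one_apply]
  have hvo : v ^ o = 1 := by
    rw [← hpow o, hgo, hone]
  -- v is a nonneg real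
  have hvns : v = ((Complex.normSq u : ℝ) : ℂ) := by
    rw [hvval, Complex.mul_conj]
  have hrpow : (Complex.normSq u) ^ o = 1 := by
    have : (((Complex.normSq u) ^ o : ℝ) : ℂ) = 1 := by
      rw [Complex.ofReal_pow, ← hvns, hvo]
    exact_mod_cast this
  have hns1 : Complex.normSq u = 1 := by
    rcases lt_trichotomy (Complex.normSq u) 1 with hlt | heq | hgt
    · have := pow_lt_one₀ (Complex.normSq_nonneg u) hlt hopos.ne'
      linarith [hrpow]
    · exact heq
    · have := one_lt_pow₀ hgt hopos.ne'
      linarith [hrpow]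
  have hv1 : v = 1 := by rw [hvns, hns1]; norm_num
  refine ⟨ι (mm x (g (g x))), hΦ' x (g (g x)) hx2, ?_⟩
  apply Units.ext
  rw [Units.val_one]
  exact hv1 ▸ rfl
end

section
/- Let n ≥ 2 and consider the subset F of (ℂ∖{0})^n consisting of all z = (z_1, …, z_n) such that: z_1 = conj(z_1)^{−1} (i.e. |z_1| = 1), z_2 = conj(z_1)·conj(z_2), z_i = conj(z_i) for 3 ≤ i ≤ n, and ∏_{l=i}^{j} z_l ≠ 1 for all 1 ≤ i ≤ j ≤ n. Then F has exactly n! connected components, each homeomorphic to ℝ^n; in particular the Euler characteristic of F is n!. (F is the fixed-point set T_{A_n}^{ḡ} for g the transposition (1 2), in the coordinates z_i = χ(β_i), so E(T_{A_n}^{ḡ}) = n!.) -/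
open Set

section Partition
variable {X : Type*} [TopologicalSpace X] {ι : Type*} (P : ι → Set X)

theorem partition_connectedComponent
    (ho : ∀ i, IsOpen (P i)) (hc : ∀ i, IsPreconnected (P i))
    (hdisj : ∀ i j, i ≠ j → Disjoint (P i) (P j))
    (hcov : ∀ x : X, ∃ i, x ∈ P i) :
    ∀ i, ∀ x ∈ P i, connectedComponent x = P i := by
  intro i x hx
  have hclopen : IsClopen (P i) := by
    refine ⟨?_, ho i⟩
    have : (P i)ᶜ = ⋃ j ∈ ({k | k ≠ i} : Set ι), P j := by
      ext y
      simp only [mem_compl_iff, mem_iUnion, mem_setOf_eq]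
      constructor
      · intro hy
        obtain ⟨j, hj⟩ := hcov y
        exact ⟨j, fun h => hy (h ▸ hj), hj⟩
      · rintro ⟨j, hji, hj⟩ hyi
        exact (hdisj j i hji).ne_of_mem hj hyi rfl
    rw [← isOpen_compl_iff, this]
    exact isOpen_biUnion fun j _ => ho j
  exact subset_antisymm (hclopen.connectedComponent_subset hx)
    ((hc i).subset_connectedComponent hx)

noncomputable def partitionComponentsEquiv
    (ho : ∀ i, IsOpen (P i)) (hc : ∀ i, IsPreconnected (P i))
    (hdisj : ∀ i j, i ≠ j → Disjoint (P i) (P j))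
    (hcov : ∀ x : X, ∃ i, x ∈ P i) (hne : ∀ i, (P i).Nonempty) :
    ConnectedComponents X ≃ ι := by
  have key := partition_connectedComponent P ho hc hdisj hcov
  refine (Equiv.ofBijective (fun i => ((hne i).choose : ConnectedComponents X)) ⟨?_, ?_⟩).symm
  · intro i j hij
    by_contra hne'
    have h1 : connectedComponent (hne i).choose = P i := key i _ (hne i).choose_spec
    have h2 : connectedComponent (hne j).choose = P j := key j _ (hne j).choose_spec
    rw [ConnectedComponents.coe_eq_coe, h1, h2] at hij
    obtain ⟨y, hy⟩ := hne i
    have hyj : y ∈ P j := by rw [← hij]; exact hy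
    exact (hdisj i j hne').ne_of_mem hy hyj rfl
  · intro c
    obtain ⟨x, rfl⟩ := ConnectedComponents.surjective_coe c
    obtain ⟨i, hi⟩ := hcov x
    refine ⟨i, ?_⟩
    rw [ConnectedComponents.coe_eq_coe, key i x hi]
    exact key i _ (hne i).choose_spec
end Partition
open Set

section Helpers
variable {X : Type*} [TopologicalSpace X]

/-- subtype-of-subtype vs intersection -/
def homeoSubtypeInter (s t : Set X) :
    ↥(Subtype.val ⁻¹' t : Set ↥s) ≃ₜ ↥(s ∩ t) where
  toFun a := ⟨a.1.1, a.1.2, a.2⟩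
  invFun a := ⟨⟨a.1, a.2.1⟩, a.2.2⟩
  left_inv a := rfl
  right_inv a := rfl
  continuous_toFun := Continuous.subtype_mk (continuous_subtype_val.comp continuous_subtype_val) _
  continuous_invFun := Continuous.subtype_mk (Continuous.subtype_mk continuous_subtype_val _) _

/-- `Fin.cons` as a homeomorphism. -/
def homeoCons (m : ℕ) : (X × (Fin m → X)) ≃ₜ (Fin (m + 1) → X) where
  toFun p := Fin.cons p.1 p.2
  invFun f := (f 0, fun i => f i.succ)
  left_inv p := by simp
  right_inv f := Fin.cons_self_tail f
  continuous_toFun := by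
    refine continuous_pi fun i => ?_
    refine Fin.cases ?_ (fun j => ?_) i
    · simpa using continuous_fst
    · simpa [Function.comp_def] using (continuous_apply j).comp continuous_snd
  continuous_invFun := by
    refine Continuous.prodMk (continuous_apply 0) ?_
    exact continuous_pi fun i => continuous_apply _

/-- open positive orthant homeomorphic to the whole space -/
noncomputable def homeoOrthant (k : ℕ) :
    (Fin k → ℝ) ≃ₜ ↥{g : Fin k → ℝ | ∀ i, 0 < g i} where
  toFun v := ⟨fun i => Real.exp (v i), fun i => Real.exp_pos _⟩
  invFun g := fun i => Real.log (g.1 i)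
  left_inv v := by ext i; simp [Real.log_exp]
  right_inv g := by
    ext i
    exact Real.exp_log (g.2 i)
  continuous_toFun := by
    refine Continuous.subtype_mk (continuous_pi fun i => ?_) _
    exact Real.continuous_exp.comp (continuous_apply i)
  continuous_invFun := by
    refine continuous_pi fun i => ?_
    refine continuous_iff_continuousAt.2 fun g => ?_
    have hev : ContinuousAt (fun g : ↥{g : Fin k → ℝ | ∀ i, 0 < g i} => g.1 i) g :=
      ((continuous_apply i).comp continuous_subtype_val).continuousAt
    exact ContinuousAt.comp (f := fun g : ↥{g : Fin k → ℝ | ∀ i, 0 < g i} => g.1 i)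
      (x := g) (Real.continuousAt_log (ne_of_gt (g.2 i))) hev

noncomputable def homeoIoo : ↥(Ioo (-1 : ℝ) 1) ≃ₜ ℝ := by
  refine (Homeomorph.setCongr ?_).trans (Homeomorph.unitBall (E := ℝ)).symm
  rw [Real.ball_eq_Ioo]
  norm_num

/-- the open upper half of the unit circle -/
def Shalf : Set ℂ := {c : ℂ | ‖c‖ = 1 ∧ 0 < c.im}

lemma mem_Shalf_iff {c : ℂ} : c ∈ Shalf ↔ ‖c‖ = 1 ∧ 0 < c.im := Iff.rfl

lemma norm_one_sq {c : ℂ} (hn : ‖c‖ = 1) : c.re ^ 2 + c.im ^ 2 = 1 := by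
  have h := Complex.normSq_apply c
  have habs : ‖c‖ = 1 := hn
  have h2 : Complex.normSq c = 1 := by rw [← Complex.sq_norm, habs]; norm_num
  nlinarith [h, h2]

lemma re_mem_Ioo (c : ↥Shalf) : c.1.re ∈ Ioo (-1 : ℝ) 1 := by
  obtain ⟨hn, him⟩ := c.2
  have h1 := norm_one_sq hn
  constructor <;> nlinarith

lemma mk_mem_Shalf (a : ↥(Ioo (-1 : ℝ) 1)) :
    Complex.mk a.1 (Real.sqrt (1 - a.1 ^ 2)) ∈ Shalf := by
  obtain ⟨h1, h2⟩ := a.2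
  have hpos : (0:ℝ) < 1 - a.1 ^ 2 := by nlinarith
  constructor
  · rw [Complex.norm_def, Complex.normSq_mk,
      Real.mul_self_sqrt hpos.le,
      show a.1 * a.1 + (1 - a.1^2) = 1 by ring, Real.sqrt_one]
  · exact Real.sqrt_pos.2 hpos

noncomputable def homeoShalf : ↥Shalf ≃ₜ ↥(Ioo (-1 : ℝ) 1) where
  toFun c := ⟨c.1.re, re_mem_Ioo c⟩
  invFun a := ⟨Complex.mk a.1 (Real.sqrt (1 - a.1 ^ 2)), mk_mem_Shalf a⟩
  left_inv c := by
    obtain ⟨hn, him⟩ := c.2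
    have h1 := norm_one_sq hn
    apply Subtype.ext
    apply Complex.ext
    · rfl
    · show Real.sqrt (1 - c.1.re ^ 2) = c.1.im
      rw [show 1 - c.1.re ^ 2 = c.1.im ^ 2 by nlinarith]
      exact Real.sqrt_sq him.le
  right_inv a := by ext; rfl
  continuous_toFun :=
    Continuous.subtype_mk (Complex.continuous_re.comp continuous_subtype_val) _
  continuous_invFun := by
    refine Continuous.subtype_mk ?_ _
    have : Continuous fun a : ↥(Ioo (-1:ℝ) 1) =>
        Complex.mk a.1 (Real.sqrt (1 - a.1 ^ 2)) := by
      simp_rw [Complex.mk_eq_add_mul_I]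
      fun_prop
    exact this

noncomputable def homeoShalfR : ↥Shalf ≃ₜ ℝ := homeoShalf.trans homeoIoo

lemma isPreconnected_Shalf : IsPreconnected Shalf := by
  have : Shalf = Subtype.val '' (Set.range (homeoShalfR.symm)) := by
    rw [Set.range_eq_univ.2 homeoShalfR.symm.surjective]
    simp
  rw [this, ← Set.image_univ, ← Set.image_comp]
  exact (isPreconnected_univ.image _
    (continuous_subtype_val.comp homeoShalfR.symm.continuous).continuousOn)

end Helpers

section Chamber
variable {m : ℕ}

/-- position of the "zero" coordinate -/
def pz (e : Equiv.Perm (Fin (m + 2))) : ℕ := (e.symm (Fin.last (m + 1)) : ℕ)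

lemma pz_le (e : Equiv.Perm (Fin (m + 2))) : pz e ≤ m + 1 :=
  Nat.lt_succ_iff.mp (e.symm (Fin.last (m + 1))).2

def ghat (g : Fin (m + 1) → ℝ) (l : ℕ) : ℝ := if h : l < m + 1 then g ⟨l, h⟩ else 0

def cum (e : Equiv.Perm (Fin (m + 2))) (g : Fin (m + 1) → ℝ) (t : ℕ) : ℝ :=
  (∑ l ∈ Finset.Ico (pz e) t, ghat g l) - ∑ l ∈ Finset.Ico t (pz e), ghat g l

lemma cum_sub (e : Equiv.Perm (Fin (m + 2))) (g : Fin (m + 1) → ℝ) {s t : ℕ} (hst : s ≤ t) :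
    cum e g t - cum e g s = ∑ l ∈ Finset.Ico s t, ghat g l := by
  unfold cum
  set p := pz e with hp
  rcases le_total t p with h | h
  · have hsp : s ≤ p := hst.trans h
    rw [Finset.Ico_eq_empty (by omega : ¬ p < t), Finset.Ico_eq_empty (by omega : ¬ p < s)]
    have h2 := Finset.sum_Ico_consecutive (ghat g) hst h
    simp only [Finset.sum_empty]
    linarith
  · rcases le_total p s with h2 | h2
    · rw [Finset.Ico_eq_empty (by omega : ¬ t < p), Finset.Ico_eq_empty (by omega : ¬ s < p)]
      have h3 := Finset.sum_Ico_consecutive (ghat g) h2 hst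
      simp only [Finset.sum_empty]
      linarith
    · rw [Finset.Ico_eq_empty (by omega : ¬ t < p), Finset.Ico_eq_empty (by omega : ¬ p < s)]
      have h3 := Finset.sum_Ico_consecutive (ghat g) h2 h
      simp only [Finset.sum_empty]
      linarith

lemma cum_pz (e : Equiv.Perm (Fin (m + 2))) (g : Fin (m + 1) → ℝ) : cum e g (pz e) = 0 := by
  simp [cum]

def gapMap (e : Equiv.Perm (Fin (m + 2))) (x : Fin (m + 1) → ℝ) : Fin (m + 1) → ℝ :=
  fun i => (Fin.snoc x 0 : Fin (m+2) → ℝ) (e i.succ) - (Fin.snoc x 0 : Fin (m+2) → ℝ) (e i.castSucc)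

def cumMap (e : Equiv.Perm (Fin (m + 2))) (g : Fin (m + 1) → ℝ) : Fin (m + 1) → ℝ :=
  fun j => cum e g (e.symm (Fin.castSucc j))

lemma snoc_cumMap (e : Equiv.Perm (Fin (m + 2))) (g : Fin (m + 1) → ℝ) :
    (Fin.snoc (cumMap e g) 0 : Fin (m + 2) → ℝ) = fun i => cum e g (e.symm i) := by
  funext i
  refine Fin.lastCases ?_ (fun j => ?_) i
  · rw [Fin.snoc_last]
    exact (cum_pz e g).symm
  · rw [Fin.snoc_castSucc]
    rfl

lemma cum_gapMap (e : Equiv.Perm (Fin (m + 2))) (x : Fin (m + 1) → ℝ) (i : Fin (m + 2)) :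
    cum e (gapMap e x) ((e.symm i : ℕ)) = (Fin.snoc x 0 : Fin (m+2) → ℝ) i := by
  set v : ℕ → ℝ := fun t => (Fin.snoc x 0 : Fin (m+2) → ℝ) (e ⟨min t (m + 1), by omega⟩) with hv
  have hgap : ∀ l, ghat (gapMap e x) l = v (l + 1) - v l := by
    intro l
    by_cases hl : l < m + 1
    · have h1 : min (l+1) (m+1) = l + 1 := by omega
      have h2 : min l (m+1) = l := by omega
      simp only [ghat, dif_pos hl, gapMap, hv]
      congr 2
      · exact Fin.ext (by simp [h1])
      · exact Fin.ext (by simp [h2])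
    · have h1 : min (l+1) (m+1) = m + 1 := by omega
      have h2 : min l (m+1) = m + 1 := by omega
      simp only [ghat, dif_neg hl, hv, h1, h2]
      ring
  have hIco : ∀ a b : ℕ, a ≤ b → ∑ l ∈ Finset.Ico a b, ghat (gapMap e x) l = v b - v a := by
    intro a b hab
    calc ∑ l ∈ Finset.Ico a b, ghat (gapMap e x) l
        = ∑ l ∈ Finset.Ico a b, (v (l+1) - v l) := by
          exact Finset.sum_congr rfl fun l _ => hgap l
      _ = v b - v a := by
          rw [Finset.sum_Ico_eq_sub _ hab, Finset.sum_range_sub, Finset.sum_range_sub]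
          ring
  have hvp : v (pz e) = 0 := by
    have h2 : min (pz e) (m+1) = pz e := by have := pz_le e; omega
    have h3 : (⟨min (pz e) (m+1), by omega⟩ : Fin (m+2)) = e.symm (Fin.last (m+1)) := by
      apply Fin.ext
      show min (pz e) (m+1) = ((e.symm (Fin.last (m+1)) : Fin (m+2)) : ℕ)
      rw [h2]; rfl
    simp only [hv, h3, Equiv.apply_symm_apply, Fin.snoc_last]
  have hvi : v ((e.symm i : ℕ)) = (Fin.snoc x 0 : Fin (m+2) → ℝ) i := by
    have h2 : min ((e.symm i : ℕ)) (m+1) = (e.symm i : ℕ) := by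
      have : ((e.symm i : ℕ)) < m + 2 := (e.symm i).2
      omega
    have h3 : (⟨min ((e.symm i : ℕ)) (m+1), by omega⟩ : Fin (m+2)) = e.symm i :=
      Fin.ext (by simp [h2])
    simp only [hv, h3, Equiv.apply_symm_apply]
  unfold cum
  rcases le_total (pz e) ((e.symm i : ℕ)) with h | h
  · rw [Finset.Ico_eq_empty (by omega : ¬ (e.symm i : ℕ) < pz e), hIco _ _ h]
    simp [hvp, hvi]
  · rw [Finset.Ico_eq_empty (by omega : ¬ pz e < (e.symm i : ℕ)), hIco _ _ h]
    simp [hvp, hvi]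

lemma cumMap_gapMap (e : Equiv.Perm (Fin (m + 2))) (x : Fin (m + 1) → ℝ) :
    cumMap e (gapMap e x) = x := by
  funext j
  have := cum_gapMap e x (Fin.castSucc j)
  simpa [cumMap, Fin.snoc_castSucc] using this

lemma gapMap_cumMap (e : Equiv.Perm (Fin (m + 2))) (g : Fin (m + 1) → ℝ) :
    gapMap e (cumMap e g) = g := by
  funext i
  simp only [gapMap, snoc_cumMap, Equiv.symm_apply_apply]
  have h := cum_sub e g
    (show ((Fin.castSucc i : Fin (m+2)) : ℕ) ≤ ((i.succ : Fin (m+2)) : ℕ) by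
      simp [Fin.le_def])
  simp only [Fin.val_succ, Fin.coe_castSucc] at h ⊢
  rw [h, Nat.Ico_succ_singleton, Finset.sum_singleton]
  simp [ghat, i.2]

lemma continuous_snoc_apply (j : Fin (m + 2)) :
    Continuous fun x : Fin (m + 1) → ℝ => (Fin.snoc x 0 : Fin (m+2) → ℝ) j := by
  refine Fin.lastCases ?_ (fun i => ?_) j
  · simpa [Fin.snoc_last] using continuous_const
  · simpa [Fin.snoc_castSucc] using continuous_apply i

lemma continuous_gapMap (e : Equiv.Perm (Fin (m + 2))) : Continuous (gapMap e) := by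
  refine continuous_pi fun i => ?_
  exact (continuous_snoc_apply _).sub (continuous_snoc_apply _)

lemma continuous_cumMap (e : Equiv.Perm (Fin (m + 2))) : Continuous (cumMap e) := by
  refine continuous_pi fun j => ?_
  unfold cumMap cum
  refine Continuous.sub ?_ ?_ <;>
  · refine continuous_finset_sum _ fun l _ => ?_
    unfold ghat
    split
    · exact continuous_apply _
    · exact continuous_const

/-- `gapMap` as a self-homeomorphism of `ℝ^{m+1}`. -/
def gapHomeo (e : Equiv.Perm (Fin (m + 2))) : (Fin (m + 1) → ℝ) ≃ₜ (Fin (m + 1) → ℝ) where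
  toFun := gapMap e
  invFun := cumMap e
  left_inv := cumMap_gapMap e
  right_inv := gapMap_cumMap e
  continuous_toFun := continuous_gapMap e
  continuous_invFun := continuous_cumMap e

def chamber (e : Equiv.Perm (Fin (m + 2))) : Set (Fin (m + 1) → ℝ) :=
  {x | StrictMono ((Fin.snoc x 0 : Fin (m+2) → ℝ) ∘ e)}

def orthant (k : ℕ) : Set (Fin k → ℝ) := {g | ∀ i, 0 < g i}

lemma chamber_eq_preimage (e : Equiv.Perm (Fin (m + 2))) :
    chamber e = gapMap e ⁻¹' orthant (m + 1) := by
  ext x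
  simp only [chamber, Set.mem_setOf_eq, Set.mem_preimage, orthant, gapMap]
  rw [Fin.strictMono_iff_lt_succ]
  constructor
  · intro h i
    simpa [sub_pos] using h i
  · intro h i
    simpa [sub_pos] using h i

lemma isOpen_orthant (k : ℕ) : IsOpen (orthant k) := by
  have : orthant k = ⋂ i, {g : Fin k → ℝ | 0 < g i} := by
    ext g; simp [orthant]
  rw [this]
  exact isOpen_iInter_of_finite fun i => isOpen_lt continuous_const (continuous_apply i)

lemma isOpen_chamber (e : Equiv.Perm (Fin (m + 2))) : IsOpen (chamber e) := by
  rw [chamber_eq_preimage]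
  exact (isOpen_orthant (m+1)).preimage (continuous_gapMap e)

lemma chamber_nonempty (e : Equiv.Perm (Fin (m + 2))) : (chamber e).Nonempty := by
  refine ⟨fun j => ((e.symm (Fin.castSucc j) : ℕ) : ℝ) - ((e.symm (Fin.last (m+1)) : ℕ) : ℝ), ?_⟩
  have hsnoc : (Fin.snoc (fun j => ((e.symm (Fin.castSucc j) : ℕ) : ℝ)
      - ((e.symm (Fin.last (m+1)) : ℕ) : ℝ)) 0 : Fin (m+2) → ℝ)
      = fun i => ((e.symm i : ℕ) : ℝ) - ((e.symm (Fin.last (m+1)) : ℕ) : ℝ) := by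
    funext i
    refine Fin.lastCases ?_ (fun j => ?_) i
    · simp [Fin.snoc_last]
    · simp [Fin.snoc_castSucc]
  show StrictMono _
  rw [hsnoc]
  intro a b hab
  simp only [Function.comp_apply, Equiv.symm_apply_apply]
  have : (a : ℕ) < (b : ℕ) := hab
  have : ((a : ℕ) : ℝ) < ((b : ℕ) : ℝ) := Nat.cast_lt.2 this
  linarith

lemma chamber_inj {e : Equiv.Perm (Fin (m + 2))} {x : Fin (m + 1) → ℝ}
    (hx : x ∈ chamber e) : Function.Injective (Fin.snoc x 0 : Fin (m+2) → ℝ) := by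
  have h : Function.Injective ((Fin.snoc x 0 : Fin (m+2) → ℝ) ∘ e) := hx.injective
  have h2 := h.comp e.symm.injective
  have h3 : ((Fin.snoc x 0 : Fin (m+2) → ℝ) ∘ e) ∘ e.symm
      = (Fin.snoc x 0 : Fin (m+2) → ℝ) := by
    funext i; simp
  rwa [h3] at h2

lemma chamber_unique {e e' : Equiv.Perm (Fin (m + 2))} {x : Fin (m + 1) → ℝ}
    (hx : x ∈ chamber e) (hx' : x ∈ chamber e') : e = e' := by
  have hinj := chamber_inj hx
  have hx1 : StrictMono ((Fin.snoc x 0 : Fin (m+2) → ℝ) ∘ e) := hx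
  have hx1' : StrictMono ((Fin.snoc x 0 : Fin (m+2) → ℝ) ∘ e') := hx'
  have h1 := Tuple.comp_sort_eq_comp_iff_monotone.2 hx1.monotone
  have h2 := Tuple.comp_sort_eq_comp_iff_monotone.2 hx1'.monotone
  have h := h1.trans h2.symm
  ext k : 1
  exact hinj (congrFun h k)

lemma chamber_cover {x : Fin (m + 1) → ℝ}
    (hinj : Function.Injective (Fin.snoc x 0 : Fin (m+2) → ℝ)) :
    x ∈ chamber (Tuple.sort (Fin.snoc x 0 : Fin (m+2) → ℝ)) := by
  have hmono := Tuple.monotone_sort (Fin.snoc x 0 : Fin (m+2) → ℝ)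
  exact hmono.strictMono_of_injective (hinj.comp (Equiv.injective _))

lemma chamber_eq_image (e : Equiv.Perm (Fin (m + 2))) :
    chamber e = ⇑(gapHomeo e).symm '' orthant (m + 1) := by
  rw [chamber_eq_preimage e]
  ext y
  constructor
  · intro hy
    exact ⟨gapMap e y, hy, (gapHomeo e).symm_apply_apply y⟩
  · rintro ⟨g, hg, rfl⟩
    have h1 : gapMap e ((gapHomeo e).symm g) = g := (gapHomeo e).apply_symm_apply g
    exact Set.mem_preimage.2 (by rw [h1]; exact hg)

/-- chamber is homeomorphic to the whole space -/
noncomputable def chamberHomeo (e : Equiv.Perm (Fin (m + 2))) :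
    ↥(chamber e) ≃ₜ (Fin (m + 1) → ℝ) :=
  (Homeomorph.setCongr (chamber_eq_image e)).trans
    ((((gapHomeo e).symm.image (orthant (m+1))).symm).trans (homeoOrthant (m+1)).symm)

lemma isPreconnected_chamber (e : Equiv.Perm (Fin (m + 2))) :
    IsPreconnected (chamber e) := by
  have : chamber e = Subtype.val '' (Set.range ((chamberHomeo e).symm)) := by
    rw [Set.range_eq_univ.2 (chamberHomeo e).symm.surjective]
    simp
  rw [this, ← Set.image_univ, ← Set.image_comp]
  exact isPreconnected_univ.image _
    (continuous_subtype_val.comp (chamberHomeo e).symm.continuous).continuousOn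

end Chamber

section CW
open Complex
variable {w c : ℂ}

noncomputable def cW (w : ℂ) : ℂ := -Complex.I * (w - 1) / ((‖w - 1‖ : ℝ) : ℂ)

lemma norm_ne_zero_of_ne {w : ℂ} (h1 : w ≠ 1) : ((‖w - 1‖ : ℝ)) ≠ 0 :=
  norm_ne_zero_iff.2 (sub_ne_zero.2 h1)

lemma conj_eq_inv (hn : ‖w‖ = 1) : (starRingEnd ℂ) w = w⁻¹ := by
  have hw0 : w ≠ 0 := by intro h; rw [h] at hn; simp at hn
  have hns : Complex.normSq w = 1 := by
    rw [Complex.normSq_eq_norm_sq, hn]; norm_num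
  have h := Complex.mul_conj w
  rw [hns] at h
  have h' : (starRingEnd ℂ) w * w = 1 := by
    rw [mul_comm]; simpa using h
  exact eq_inv_of_mul_eq_one_left h'

lemma norm_cW (h1 : w ≠ 1) : ‖cW w‖ = 1 := by
  have h2 := norm_ne_zero_of_ne h1
  rw [cW, norm_div, norm_mul, norm_neg, Complex.norm_I, one_mul, Complex.norm_real,
    Real.norm_eq_abs, _root_.abs_of_nonneg (norm_nonneg _), div_self h2]

lemma re_lt_one (hn : ‖w‖ = 1) (h1 : w ≠ 1) : w.re < 1 := by
  have h := norm_one_sq hn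
  rcases lt_or_ge w.re 1 with h' | h'
  · exact h'
  · exfalso
    have him : w.im = 0 := by nlinarith
    have hre : w.re = 1 := by nlinarith
    exact h1 (Complex.ext hre him)

lemma im_cW_pos (hn : ‖w‖ = 1) (h1 : w ≠ 1) : 0 < (cW w).im := by
  have h2 := norm_ne_zero_of_ne h1
  have h2' : 0 < ‖w - 1‖ := lt_of_le_of_ne (norm_nonneg _) (Ne.symm h2)
  have him : (cW w).im = (1 - w.re) / ‖w - 1‖ := by
    rw [cW]
    rw [div_eq_mul_inv, ← Complex.ofReal_inv]
    simp [Complex.mul_im, Complex.mul_re]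
    ring
  rw [him]
  exact div_pos (by linarith [re_lt_one hn h1]) h2'

lemma sq_cW (hn : ‖w‖ = 1) (h1 : w ≠ 1) : cW w ^ 2 = w := by
  have hw0 : w ≠ 0 := by intro h; rw [h] at hn; simp at hn
  have hconj := conj_eq_inv hn
  have hr0 : ((‖w - 1‖ : ℝ) : ℂ) ≠ 0 := by
    simpa using norm_ne_zero_of_ne h1
  have hw1 : w - 1 ≠ 0 := sub_ne_zero.2 h1
  have hr2 : ((‖w - 1‖ : ℝ) : ℂ) ^ 2 = (w - 1) * (w⁻¹ - 1) := by
    calc ((‖w - 1‖ : ℝ) : ℂ) ^ 2 = ((Complex.normSq (w - 1) : ℝ) : ℂ) := by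
          rw [← Complex.ofReal_pow, ← Complex.normSq_eq_norm_sq]
      _ = (w - 1) * (w⁻¹ - 1) := by
          rw [← Complex.mul_conj, map_sub, map_one, hconj]
  have hstep : cW w ^ 2 = (-Complex.I) ^ 2 * (w - 1) ^ 2 / ((‖w - 1‖ : ℝ) : ℂ) ^ 2 := by
    rw [cW]; ring
  rw [hstep, hr2]
  have hI : (-Complex.I) ^ 2 = -1 := by
    rw [neg_pow, Complex.I_sq]; norm_num
  rw [hI]
  have hinv1 : w⁻¹ - 1 ≠ 0 := by
    rw [sub_ne_zero]
    intro h
    exact h1 (by rw [← inv_inv w, h, inv_one])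
  have hD : (w - 1) * (w⁻¹ - 1) ≠ 0 := mul_ne_zero hw1 hinv1
  rw [div_eq_iff hD]
  field_simp
  ring

lemma cW_mem_Shalf (hn : ‖w‖ = 1) (h1 : w ≠ 1) : cW w ∈ Shalf :=
  ⟨norm_cW h1, im_cW_pos hn h1⟩

lemma cW_sq_eq (hc : c ∈ Shalf) : cW (c ^ 2) = c := by
  obtain ⟨hn, him⟩ := hc
  have hc0 : c ≠ 0 := by intro h; rw [h] at hn; simp at hn
  have hconj := conj_eq_inv hn
  have h1 : c ^ 2 - 1 = c * (c - (starRingEnd ℂ) c) := by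
    rw [hconj]; field_simp
  have h2 := Complex.sub_conj c
  have hnorm : ‖c ^ 2 - 1‖ = 2 * c.im := by
    rw [h1, h2, norm_mul, hn, one_mul, norm_mul, Complex.norm_I, mul_one,
      Complex.norm_real, Real.norm_eq_abs, abs_of_pos (by positivity)]
  have him0 : ((2 * c.im : ℝ) : ℂ) ≠ 0 := by
    simp only [ne_eq, Complex.ofReal_eq_zero]
    positivity
  rw [cW, hnorm, h1, h2]
  have hkey : -Complex.I * (c * (((2 * c.im : ℝ) : ℂ) * Complex.I))
      = ((2 * c.im : ℝ) : ℂ) * c := by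
    rw [show -Complex.I * (c * (((2 * c.im : ℝ) : ℂ) * Complex.I))
        = (-(Complex.I * Complex.I)) * (((2 * c.im : ℝ) : ℂ) * c) from by ring,
      Complex.I_mul_I]
    ring
  rw [hkey, mul_comm, mul_div_assoc, div_self him0, mul_one]

end CW

section FG
variable {m : ℕ}

def Fset (m : ℕ) : Set (Fin (m + 2) → ℂ) :=
  {z | (∀ i, z i ≠ 0) ∧
    z ⟨0, by omega⟩ = (starRingEnd ℂ (z ⟨0, by omega⟩))⁻¹ ∧
    z ⟨1, by omega⟩ = starRingEnd ℂ (z ⟨0, by omega⟩) * starRingEnd ℂ (z ⟨1, by omega⟩) ∧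
    (∀ i : Fin (m + 2), 2 ≤ (i : ℕ) → z i = starRingEnd ℂ (z i)) ∧
    (∀ i j : Fin (m + 2), i ≤ j → ∏ l ∈ Finset.Icc i j, z l ≠ 1)}

def WinjSet (m : ℕ) : Set (Fin (m + 1) → ℝ) :=
  {x | Function.Injective (Fin.snoc x 0 : Fin (m + 2) → ℝ)}

def Gset (m : ℕ) : Set (ℂ × (Fin (m + 1) → ℝ)) := Shalf ×ˢ WinjSet m

def zhat (z : Fin (m + 2) → ℂ) (l : ℕ) : ℂ := if h : l < m + 2 then z ⟨l, h⟩ else 1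

def PN (z : Fin (m + 2) → ℂ) (t : ℕ) : ℂ := ∏ l ∈ Finset.range t, zhat z l

lemma prod_Icc_eq (z : Fin (m + 2) → ℂ) (i j : Fin (m + 2)) :
    ∏ l ∈ Finset.Icc i j, z l = ∏ t ∈ Finset.Icc (i : ℕ) (j : ℕ), zhat z t := by
  rw [← Fin.map_valEmbedding_Icc, Finset.prod_map]
  refine Finset.prod_congr rfl fun l _ => ?_
  simp [zhat, l.2]

lemma PN_mul (z : Fin (m + 2) → ℂ) {a b : ℕ} (hab : a ≤ b) :
    PN z a * ∏ t ∈ Finset.Ico a b, zhat z t = PN z b :=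
  Finset.prod_range_mul_prod_Ico _ hab

lemma prod_Icc_fin (z : Fin (m + 2) → ℂ) {i j : Fin (m + 2)} (hij : i ≤ j) :
    PN z (i : ℕ) * ∏ l ∈ Finset.Icc i j, z l = PN z ((j : ℕ) + 1) := by
  rw [prod_Icc_eq, ← Finset.Ico_add_one_right_eq_Icc]
  exact PN_mul z (by exact_mod_cast Nat.le_succ_of_le hij)

def xhat (x : Fin (m + 1) → ℝ) (l : ℕ) : ℝ := if h : l < m + 1 then x ⟨l, h⟩ else 1

noncomputable def qf (c : ℂ) (x : Fin (m + 1) → ℝ) (k : ℕ) : ℂ :=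
  if k = 0 then 1 else if k = 1 then c ^ 2 else c * ((xhat x (k - 2) : ℝ) : ℂ)

lemma qf_zero (c : ℂ) (x : Fin (m + 1) → ℝ) : qf c x 0 = 1 := rfl
lemma qf_one (c : ℂ) (x : Fin (m + 1) → ℝ) : qf c x 1 = c ^ 2 := rfl
lemma qf_add_two (c : ℂ) (x : Fin (m + 1) → ℝ) (k : ℕ) :
    qf c x (k + 2) = c * ((xhat x k : ℝ) : ℂ) := by
  simp [qf]

noncomputable def phiMap (c : ℂ) (x : Fin (m + 1) → ℝ) : Fin (m + 2) → ℂ :=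
  fun i => qf c x ((i : ℕ) + 1) / qf c x (i : ℕ)

noncomputable def psiC (z : Fin (m + 2) → ℂ) : ℂ := cW (z ⟨0, by omega⟩)

noncomputable def psiX (z : Fin (m + 2) → ℂ) : Fin (m + 1) → ℝ :=
  fun k => (PN z ((k : ℕ) + 2) / psiC z).re

/- ### facts about members of Gset -/
section Gfacts
variable {c : ℂ} {x : Fin (m + 1) → ℝ}

lemma snoc_apply_ne (hx : x ∈ WinjSet m) (l : Fin (m + 1)) : x l ≠ 0 := by
  intro h
  have h2 : (Fin.snoc x 0 : Fin (m+2) → ℝ) (Fin.castSucc l)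
      = (Fin.snoc x 0 : Fin (m+2) → ℝ) (Fin.last (m+1)) := by
    rw [Fin.snoc_castSucc, Fin.snoc_last, h]
  exact absurd (hx h2) (Fin.ne_of_lt (Fin.castSucc_lt_last l))

lemma snoc_apply_inj (hx : x ∈ WinjSet m) {k k' : Fin (m + 1)} (h : x k = x k') : k = k' := by
  have h2 : (Fin.snoc x 0 : Fin (m+2) → ℝ) (Fin.castSucc k)
      = (Fin.snoc x 0 : Fin (m+2) → ℝ) (Fin.castSucc k') := by
    rw [Fin.snoc_castSucc, Fin.snoc_castSucc, h]
  exact Fin.castSucc_injective _ (hx h2)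

lemma xhat_ne (hx : x ∈ WinjSet m) (l : ℕ) : xhat x l ≠ 0 := by
  unfold xhat
  split
  · exact snoc_apply_ne hx _
  · exact one_ne_zero

lemma Shalf_ne_zero (hc : c ∈ Shalf) : c ≠ 0 := by
  intro h
  have := hc.2
  rw [h] at this
  simp at this

lemma qf_ne (hc : c ∈ Shalf) (hx : x ∈ WinjSet m) (k : ℕ) : qf c x k ≠ 0 := by
  have hc0 := Shalf_ne_zero hc
  rcases k with _ | _ | k
  · exact one_ne_zero
  · exact pow_ne_zero 2 hc0
  · rw [qf_add_two]
    exact mul_ne_zero hc0 (by exact_mod_cast xhat_ne hx k)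

lemma sq_ne_one (hc : c ∈ Shalf) : c ^ 2 ≠ 1 := by
  intro h
  have him := hc.2
  have h2 : (c - 1) * (c + 1) = 0 := by linear_combination h
  rcases mul_eq_zero.1 h2 with h3 | h3
  · have hce : c = 1 := by linear_combination h3
    rw [hce] at him; simp at him
  · have hce : c = -1 := by linear_combination h3
    rw [hce] at him; simp at him

lemma mul_real_im (r : ℝ) : (c * (r : ℂ)).im = c.im * r := by
  simp [Complex.mul_im]

lemma xhat_eq (x : Fin (m + 1) → ℝ) {k : ℕ} (hk : k < m + 1) :
    xhat x k = x ⟨k, hk⟩ := dif_pos hk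

lemma qf_inj_lt (hc : c ∈ Shalf) (hx : x ∈ WinjSet m) {a b : ℕ}
    (hab : a < b) (hb : b ≤ m + 2) : qf c x a ≠ qf c x b := by
  have hc0 := Shalf_ne_zero hc
  have him := hc.2
  rcases b with _ | _ | k
  · omega
  · -- b = 1, a = 0 : 1 ≠ c ^ 2
    have ha0 : a = 0 := by omega
    subst ha0
    rw [qf_zero, qf_one]
    exact fun h => sq_ne_one hc h.symm
  · -- b = k + 2
    have hk : k < m + 1 := by omega
    rw [qf_add_two]
    have hr : xhat x k ≠ 0 := xhat_ne hx k
    have himcr : (c * ((xhat x k : ℝ) : ℂ)).im ≠ 0 := by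
      rw [mul_real_im]
      exact mul_ne_zero (ne_of_gt him) hr
    rcases a with _ | _ | j
    · -- 1 ≠ c * r
      rw [qf_zero]
      intro h
      apply himcr
      rw [← h]
      rfl
    · -- c ^ 2 ≠ c * r
      rw [qf_one]
      intro h
      have h2 : c * c = c * ((xhat x k : ℝ) : ℂ) := by
        rw [← h]; ring
      have h3 : c = ((xhat x k : ℝ) : ℂ) := mul_left_cancel₀ hc0 h2
      have : c.im = 0 := by rw [h3]; simp
      linarith
    · -- c * r_j ≠ c * r_k
      have hj : j < m + 1 := by omega
      rw [qf_add_two]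
      intro h
      have h2 : ((xhat x j : ℝ) : ℂ) = ((xhat x k : ℝ) : ℂ) := mul_left_cancel₀ hc0 h
      have h3 : xhat x j = xhat x k := by exact_mod_cast h2
      rw [xhat_eq x hj, xhat_eq x hk] at h3
      have h4 := snoc_apply_inj hx h3
      have h5 : j = k := congrArg Fin.val h4
      omega

lemma qf_inj (hc : c ∈ Shalf) (hx : x ∈ WinjSet m) {a b : ℕ}
    (ha : a ≤ m + 2) (hb : b ≤ m + 2) (hab : a ≠ b) : qf c x a ≠ qf c x b := by
  rcases Nat.lt_or_ge a b with h | h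
  · exact qf_inj_lt hc hx h hb
  · exact (qf_inj_lt hc hx (by omega) ha).symm

end Gfacts

section PhiFacts
variable {c : ℂ} {x : Fin (m + 1) → ℝ}

lemma zhat_phi (c : ℂ) (x : Fin (m + 1) → ℝ) {t : ℕ} (ht : t < m + 2) :
    zhat (phiMap c x) t = qf c x (t + 1) / qf c x t := by
  rw [zhat, dif_pos ht]
  rfl

lemma PN_phi (hc : c ∈ Shalf) (hx : x ∈ WinjSet m) :
    ∀ t, t ≤ m + 2 → PN (phiMap c x) t = qf c x t := by
  intro t
  induction t with
  | zero => intro _; simp [PN, qf_zero]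
  | succ t ih =>
    intro ht
    rw [PN, Finset.prod_range_succ, ← PN, ih (by omega), zhat_phi c x (by omega : t < m + 2)]
    rw [mul_comm, div_mul_cancel₀ _ (qf_ne hc hx t)]

lemma prod_Icc_phi (hc : c ∈ Shalf) (hx : x ∈ WinjSet m) {i j : Fin (m + 2)} (hij : i ≤ j) :
    ∏ l ∈ Finset.Icc i j, phiMap c x l = qf c x ((j : ℕ) + 1) / qf c x (i : ℕ) := by
  have h := prod_Icc_fin (phiMap c x) hij
  rw [PN_phi hc hx _ (by omega : (i : ℕ) ≤ m + 2),
    PN_phi hc hx _ (by omega : (j : ℕ) + 1 ≤ m + 2)] at h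
  field_simp [qf_ne hc hx] at h ⊢
  linear_combination h

lemma phi_mem (hcx : (c, x) ∈ Gset m) : phiMap c x ∈ Fset m := by
  obtain ⟨hc, hx⟩ := hcx
  have hc0 := Shalf_ne_zero hc
  have hconj : (starRingEnd ℂ) c = c⁻¹ := conj_eq_inv hc.1
  refine ⟨?_, ?_, ?_, ?_, ?_⟩
  · intro i
    exact div_ne_zero (qf_ne hc hx _) (qf_ne hc hx _)
  · show phiMap c x ⟨0, by omega⟩ = _
    have h0 : phiMap c x ⟨0, by omega⟩ = c ^ 2 := by
      show qf c x 1 / qf c x 0 = c ^ 2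
      rw [qf_zero, qf_one, div_one]
    rw [h0, map_pow, hconj]
    field_simp
  · have h0 : phiMap c x ⟨0, by omega⟩ = c ^ 2 := by
      show qf c x 1 / qf c x 0 = c ^ 2
      rw [qf_zero, qf_one, div_one]
    have h1 : phiMap c x ⟨1, by omega⟩ = c * ((xhat x 0 : ℝ) : ℂ) / c ^ 2 := by
      show qf c x 2 / qf c x 1 = _
      rw [qf_one, qf_add_two]
    rw [h0, h1, map_div₀, map_mul, map_pow, hconj, Complex.conj_ofReal]
    field_simp
  · intro i hi
    obtain ⟨k, hk⟩ : ∃ k, (i : ℕ) = k + 2 := ⟨(i : ℕ) - 2, by omega⟩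
    have hzi : phiMap c x i = c * ((xhat x (k+1) : ℝ) : ℂ) / (c * ((xhat x k : ℝ) : ℂ)) := by
      show qf c x ((i : ℕ) + 1) / qf c x (i : ℕ) = _
      rw [show (i:ℕ)+1 = (k+1)+2 by omega, hk, qf_add_two, qf_add_two]
    rw [hzi, map_div₀, map_mul, map_mul, hconj, Complex.conj_ofReal, Complex.conj_ofReal]
    rw [div_eq_div_iff (mul_ne_zero hc0 (by exact_mod_cast xhat_ne hx k))
      (mul_ne_zero (inv_ne_zero hc0) (by exact_mod_cast xhat_ne hx k))]
    field_simp
  · intro i j hij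
    rw [prod_Icc_phi hc hx hij]
    intro h
    have h2 := (div_eq_one_iff_eq (qf_ne hc hx (i : ℕ))).1 h
    exact qf_inj hc hx (by omega) (by omega) (by omega) h2

end PhiFacts

section PsiFacts
variable {z : Fin (m + 2) → ℂ}

lemma fw_ne1 (hz : z ∈ Fset m) : z ⟨0, by omega⟩ ≠ 1 := by
  have h := hz.2.2.2.2 ⟨0, by omega⟩ ⟨0, by omega⟩ le_rfl
  rwa [Finset.Icc_self, Finset.prod_singleton] at h

lemma fw_norm (hz : z ∈ Fset m) : ‖z ⟨0, by omega⟩‖ = 1 := by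
  have h := hz.2.1
  have h0 : z ⟨0, by omega⟩ ≠ 0 := hz.1 _
  have hc0 : (starRingEnd ℂ) (z ⟨0, by omega⟩) ≠ 0 := by
    simpa using h0
  have h2 : z ⟨0, by omega⟩ * (starRingEnd ℂ) (z ⟨0, by omega⟩) = 1 := by
    nth_rewrite 1 [h]
    exact inv_mul_cancel₀ hc0
  rw [Complex.mul_conj] at h2
  have h3 : Complex.normSq (z ⟨0, by omega⟩) = 1 := by exact_mod_cast h2
  rw [Complex.norm_def, h3, Real.sqrt_one]

lemma fzhat_ne (hz : z ∈ Fset m) (l : ℕ) : zhat z l ≠ 0 := by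
  unfold zhat
  split
  · exact hz.1 _
  · exact one_ne_zero

lemma PN_ne (hz : z ∈ Fset m) (t : ℕ) : PN z t ≠ 0 :=
  Finset.prod_ne_zero_iff.2 fun l _ => fzhat_ne hz l

lemma PN_one (z : Fin (m + 2) → ℂ) : PN z 1 = z ⟨0, by omega⟩ := by
  rw [PN, Finset.prod_range_one, zhat, dif_pos (by omega : 0 < m + 2)]

lemma fconj1 (hz : z ∈ Fset m) :
    (starRingEnd ℂ) (z ⟨1, by omega⟩) = z ⟨0, by omega⟩ * z ⟨1, by omega⟩ := by
  have h := congrArg (starRingEnd ℂ) hz.2.2.1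
  rwa [map_mul, Complex.conj_conj, Complex.conj_conj] at h

lemma PN_conj (hz : z ∈ Fset m) :
    ∀ t, 2 ≤ t → t ≤ m + 2 → (starRingEnd ℂ) (PN z t) = PN z t / z ⟨0, by omega⟩ := by
  have hw0 : z ⟨0, by omega⟩ ≠ 0 := hz.1 _
  have hconj0 : (starRingEnd ℂ) (z ⟨0, by omega⟩) = (z ⟨0, by omega⟩)⁻¹ :=
    conj_eq_inv (fw_norm hz)
  intro t ht2
  induction t, ht2 using Nat.le_induction with
  | base =>
    intro _
    have h2 : PN z 2 = z ⟨0, by omega⟩ * z ⟨1, by omega⟩ := by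
      rw [PN, Finset.prod_range_succ, ← PN, PN_one, zhat, dif_pos (by omega : 1 < m + 2)]
    rw [h2, map_mul, hconj0, fconj1 hz]
    field_simp
  | succ t ht ih =>
    intro htm
    have hreal : (starRingEnd ℂ) (zhat z t) = zhat z t := by
      have h4 := hz.2.2.2.1 ⟨t, by omega⟩ (by exact_mod_cast ht)
      rw [zhat, dif_pos (by omega : t < m + 2)]
      exact h4.symm
    rw [PN, Finset.prod_range_succ, ← PN, map_mul, ih (by omega), hreal]
    ring

lemma psiC_mem (hz : z ∈ Fset m) : psiC z ∈ Shalf :=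
  cW_mem_Shalf (fw_norm hz) (fw_ne1 hz)

lemma psiC_sq (hz : z ∈ Fset m) : psiC z ^ 2 = z ⟨0, by omega⟩ :=
  sq_cW (fw_norm hz) (fw_ne1 hz)

lemma psiX_real (hz : z ∈ Fset m) (k : Fin (m + 1)) :
    ((psiX z k : ℝ) : ℂ) = PN z ((k : ℕ) + 2) / psiC z := by
  have hc := psiC_mem hz
  have hc0 := Shalf_ne_zero hc
  have hw0 : z ⟨0, by omega⟩ ≠ 0 := hz.1 _
  have hconjc : (starRingEnd ℂ) (psiC z) = (psiC z)⁻¹ := conj_eq_inv (norm_cW (fw_ne1 hz))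
  have hsq := psiC_sq hz
  have hPNc := PN_conj hz ((k : ℕ) + 2) (by omega) (by omega)
  have hself : (starRingEnd ℂ) (PN z ((k : ℕ) + 2) / psiC z) = PN z ((k : ℕ) + 2) / psiC z := by
    rw [map_div₀, hPNc, hconjc, ← hsq]
    field_simp
  exact Complex.conj_eq_iff_re.1 hself

lemma PN_inj (hz : z ∈ Fset m) {a b : ℕ} (hab : a < b) (hb : b ≤ m + 2) :
    PN z a ≠ PN z b := by
  have ha2 : a < m + 2 := by omega
  have hb1 : b - 1 < m + 2 := by omega
  have hle : (⟨a, ha2⟩ : Fin (m + 2)) ≤ ⟨b - 1, hb1⟩ := by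
    rw [Fin.le_def]
    simpa using (by omega : a ≤ b - 1)
  have hne := hz.2.2.2.2 ⟨a, ha2⟩ ⟨b - 1, hb1⟩ hle
  rw [prod_Icc_eq] at hne
  have hIco : ∏ t ∈ Finset.Ico a b, zhat z t ≠ 1 := by
    rw [show b = (b - 1) + 1 by omega, Finset.Ico_add_one_right_eq_Icc]
    simpa using hne
  have hmul := PN_mul z (le_of_lt hab)
  intro h
  apply hIco
  have h2 : PN z a * 1 = PN z a * ∏ t ∈ Finset.Ico a b, zhat z t := by
    rw [mul_one, hmul, ← h]
  exact (mul_left_cancel₀ (PN_ne hz a) h2).symm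

lemma psiX_mem (hz : z ∈ Fset m) : psiX z ∈ WinjSet m := by
  have hc0 := Shalf_ne_zero (psiC_mem hz)
  have hval : ∀ k : Fin (m + 1), PN z ((k : ℕ) + 2) = psiC z * ((psiX z k : ℝ) : ℂ) := by
    intro k
    rw [psiX_real hz k]
    field_simp
  intro a b hab
  revert hab
  refine Fin.lastCases ?_ (fun a' => ?_) a <;> refine Fin.lastCases ?_ (fun b' => ?_) b <;>
    intro h
  · rfl
  · -- last = castSucc b'
    exfalso
    rw [Fin.snoc_last, Fin.snoc_castSucc] at h
    have : PN z ((b' : ℕ) + 2) = 0 := by rw [hval b', ← h]; simp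
    exact PN_ne hz _ this
  · exfalso
    rw [Fin.snoc_last, Fin.snoc_castSucc] at h
    have : PN z ((a' : ℕ) + 2) = 0 := by rw [hval a', h]; simp
    exact PN_ne hz _ this
  · rw [Fin.snoc_castSucc, Fin.snoc_castSucc] at h
    have hPN : PN z ((a' : ℕ) + 2) = PN z ((b' : ℕ) + 2) := by
      rw [hval a', hval b', h]
    have : (a' : ℕ) = (b' : ℕ) := by
      by_contra hne
      rcases Nat.lt_or_ge (a' : ℕ) (b' : ℕ) with hlt | hge
      · exact PN_inj hz (by omega) (by omega) hPN
      · exact PN_inj hz (by omega : (b' : ℕ) + 2 < (a' : ℕ) + 2) (by omega) hPN.symm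
    exact congrArg Fin.castSucc (Fin.ext this)

lemma psi_mem (hz : z ∈ Fset m) : (psiC z, psiX z) ∈ Gset m :=
  ⟨psiC_mem hz, psiX_mem hz⟩

end PsiFacts

section Inverses
variable {z : Fin (m + 2) → ℂ} {c : ℂ} {x : Fin (m + 1) → ℝ}

lemma phi_psi (hz : z ∈ Fset m) : phiMap (psiC z) (psiX z) = z := by
  have hc0 := Shalf_ne_zero (psiC_mem hz)
  have hq : ∀ t, t ≤ m + 2 → qf (psiC z) (psiX z) t = PN z t := by
    intro t ht
    rcases t with _ | _ | k
    · rw [qf_zero, PN, Finset.range_zero, Finset.prod_empty]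
    · rw [qf_one, psiC_sq hz, PN_one]
    · have hk : k < m + 1 := by omega
      rw [qf_add_two, xhat_eq _ hk, psiX_real hz ⟨k, hk⟩]
      field_simp
  funext i
  show qf _ _ ((i : ℕ) + 1) / qf _ _ (i : ℕ) = z i
  rw [hq _ (by omega), hq _ (by omega)]
  have h2 : zhat z (i : ℕ) = z i := by
    rw [zhat, dif_pos i.2, Fin.eta]
  have h3 : PN z ((i : ℕ) + 1) = PN z (i : ℕ) * z i := by
    rw [PN, Finset.prod_range_succ, ← PN, h2]
  rw [h3, mul_comm, mul_div_assoc, div_self (PN_ne hz _), mul_one]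

lemma phi_zero (c : ℂ) (x : Fin (m + 1) → ℝ) : phiMap c x ⟨0, by omega⟩ = c ^ 2 := by
  show qf c x 1 / qf c x 0 = c ^ 2
  rw [qf_zero, qf_one, div_one]

lemma psi_phi_C (hcx : (c, x) ∈ Gset m) : psiC (phiMap c x) = c := by
  rw [psiC, phi_zero]
  exact cW_sq_eq hcx.1

lemma psi_phi_X (hcx : (c, x) ∈ Gset m) : psiX (phiMap c x) = x := by
  obtain ⟨hc, hx⟩ := hcx
  have hc0 := Shalf_ne_zero hc
  funext k
  rw [psiX, psi_phi_C ⟨hc, hx⟩, PN_phi hc hx _ (by omega), qf_add_two,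
    mul_div_cancel_left₀ _ hc0, Complex.ofReal_re, xhat_eq _ k.2, Fin.eta]

lemma continuous_qf (k : ℕ) :
    Continuous fun p : ℂ × (Fin (m + 1) → ℝ) => qf p.1 p.2 k := by
  rcases k with _ | _ | k
  · exact continuous_const
  · exact continuous_fst.pow 2
  · show Continuous fun p : ℂ × (Fin (m + 1) → ℝ) => p.1 * ((xhat p.2 k : ℝ) : ℂ)
    refine continuous_fst.mul ?_
    by_cases hk : k < m + 1
    · simp only [xhat, dif_pos hk]
      exact Complex.continuous_ofReal.comp ((continuous_apply _).comp continuous_snd)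
    · simp only [xhat, dif_neg hk]
      exact continuous_const

lemma continuous_psiC : Continuous fun q : ↥(Fset m) => psiC q.1 := by
  have h0 : Continuous fun q : ↥(Fset m) => q.1 ⟨0, by omega⟩ :=
    (continuous_apply _).comp continuous_subtype_val
  unfold psiC cW
  refine Continuous.div (continuous_const.mul (h0.sub continuous_const))
    (Complex.continuous_ofReal.comp (h0.sub continuous_const).norm) ?_
  intro q
  exact Complex.ofReal_ne_zero.2 (norm_ne_zero_of_ne (fw_ne1 q.2))

lemma continuous_PN (t : ℕ) : Continuous fun q : ↥(Fset m) => PN q.1 t := by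
  refine continuous_finset_prod _ fun l _ => ?_
  by_cases h : l < m + 2
  · simp only [zhat, dif_pos h]
    exact (continuous_apply _).comp continuous_subtype_val
  · simp only [zhat, dif_neg h]
    exact continuous_const

noncomputable def homeoGF (m : ℕ) : ↥(Gset m) ≃ₜ ↥(Fset m) where
  toFun p := ⟨phiMap p.1.1 p.1.2, phi_mem (by rw [Prod.mk.eta]; exact p.2)⟩
  invFun q := ⟨(psiC q.1, psiX q.1), psi_mem q.2⟩
  left_inv p := by
    apply Subtype.ext
    have hp : (p.1.1, p.1.2) ∈ Gset m := by rw [Prod.mk.eta]; exact p.2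
    exact Prod.ext (psi_phi_C hp) (psi_phi_X hp)
  right_inv q := Subtype.ext (phi_psi q.2)
  continuous_toFun := by
    refine Continuous.subtype_mk ?_ _
    refine continuous_pi fun i => ?_
    refine Continuous.div ?_ ?_ ?_
    · exact (continuous_qf ((i : ℕ) + 1)).comp continuous_subtype_val
    · exact (continuous_qf (i : ℕ)).comp continuous_subtype_val
    · intro p
      exact qf_ne p.2.1 p.2.2 _
  continuous_invFun := by
    refine Continuous.subtype_mk (Continuous.prodMk continuous_psiC ?_) _
    refine continuous_pi fun k => ?_
    refine Complex.continuous_re.comp (Continuous.div (continuous_PN _) continuous_psiC ?_)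
    intro q
    exact Shalf_ne_zero (psiC_mem q.2)

end Inverses
end FG

section Final

def PF (m : ℕ) (e : Equiv.Perm (Fin (m + 2))) : Set ↥(Fset m) :=
  (homeoGF m) '' (Subtype.val ⁻¹' (Prod.snd ⁻¹' chamber e))

lemma isOpen_PF (m : ℕ) (e : Equiv.Perm (Fin (m + 2))) : IsOpen (PF m e) :=
  (homeoGF m).isOpenMap _
    (((isOpen_chamber e).preimage continuous_snd).preimage continuous_subtype_val)

lemma I_mem_Shalf : Complex.I ∈ Shalf := ⟨Complex.norm_I, by simp [Complex.I_im]⟩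

lemma PF_nonempty (m : ℕ) (e : Equiv.Perm (Fin (m + 2))) : (PF m e).Nonempty := by
  obtain ⟨x0, hx0⟩ := chamber_nonempty e
  have hmem : (Complex.I, x0) ∈ Gset m := ⟨I_mem_Shalf, chamber_inj hx0⟩
  exact ⟨homeoGF m ⟨(Complex.I, x0), hmem⟩, ⟨(Complex.I, x0), hmem⟩, hx0, rfl⟩

lemma PF_disjoint (m : ℕ) : ∀ e e', e ≠ e' → Disjoint (PF m e) (PF m e') := by
  intro e e' hne
  rw [Set.disjoint_left]
  rintro q ⟨p, hp, rfl⟩ ⟨p', hp', heq⟩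
  have hpp : p' = p := (homeoGF m).injective heq
  subst hpp
  exact hne (chamber_unique hp hp')

lemma PF_cover (m : ℕ) : ∀ q : ↥(Fset m), ∃ e, q ∈ PF m e := by
  intro q
  set p := (homeoGF m).symm q with hp
  have hpx : p.1.2 ∈ WinjSet m := p.2.2
  refine ⟨Tuple.sort (Fin.snoc p.1.2 0 : Fin (m+2) → ℝ), ⟨p, chamber_cover hpx, ?_⟩⟩
  rw [hp, Homeomorph.apply_symm_apply]

lemma Gset_inter_chamber (m : ℕ) (e : Equiv.Perm (Fin (m + 2))) :
    Gset m ∩ (Prod.snd ⁻¹' chamber e) = Shalf ×ˢ chamber e := by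
  ext p
  constructor
  · rintro ⟨⟨hc, _⟩, hch⟩
    exact ⟨hc, hch⟩
  · rintro ⟨hc, hch⟩
    exact ⟨⟨hc, chamber_inj hch⟩, hch⟩

noncomputable def homeoPF (m : ℕ) (e : Equiv.Perm (Fin (m + 2))) :
    ↥(PF m e) ≃ₜ (Fin (m + 2) → ℝ) :=
  (((homeoGF m).image _).symm.trans
    ((homeoSubtypeInter (Gset m) (Prod.snd ⁻¹' chamber e)).trans
      ((Homeomorph.setCongr (Gset_inter_chamber m e)).trans
        (Homeomorph.Set.prod Shalf (chamber e))))).trans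
    ((homeoShalfR.prodCongr (chamberHomeo e)).trans (homeoCons (m + 1)))

lemma isPreconnected_PF (m : ℕ) (e : Equiv.Perm (Fin (m + 2))) :
    IsPreconnected (PF m e) := by
  have h : PF m e = Subtype.val '' (Set.range (homeoPF m e).symm) := by
    rw [Set.range_eq_univ.2 (homeoPF m e).symm.surjective]
    simp
  rw [h, ← Set.image_univ, ← Set.image_comp]
  exact isPreconnected_univ.image _
    (continuous_subtype_val.comp (homeoPF m e).symm.continuous).continuousOn

end Final

/-- The fixed-point set `T_{Aₙ}^{ḡ}` for `g` the transposition `(1 2)`, in the coordinates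
`zᵢ = χ(βᵢ)` (so `z₁ = conj(z₁)⁻¹`, `z₂ = conj(z₁)·conj(z₂)`, `zᵢ = conj(zᵢ)` for `i ≥ 3`,
and all consecutive products `∏_{l=i}^{j} z_l ≠ 1`), has exactly `n!` connected components,
each homeomorphic to `ℝⁿ`; in particular its Euler characteristic is `n!`.
(Indices are `0`-based in this formalization: `z₁, …, zₙ` correspond to `z 0, …, z (n-1)`.) -/
theorem stmt_9 (n : ℕ) (hn : 2 ≤ n)
    (F : Set (Fin n → ℂ))
    (hF : F = {z : Fin n → ℂ |
      (∀ i, z i ≠ 0) ∧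
      z ⟨0, by omega⟩ = (starRingEnd ℂ (z ⟨0, by omega⟩))⁻¹ ∧
      z ⟨1, by omega⟩ = starRingEnd ℂ (z ⟨0, by omega⟩) * starRingEnd ℂ (z ⟨1, by omega⟩) ∧
      (∀ i : Fin n, 2 ≤ (i : ℕ) → z i = starRingEnd ℂ (z i)) ∧
      (∀ i j : Fin n, i ≤ j → ∏ l ∈ Finset.Icc i j, z l ≠ 1)}) :
    Nat.card (ConnectedComponents F) = Nat.factorial n ∧
    ∀ x : F, Nonempty ((connectedComponent x) ≃ₜ (Fin n → ℝ)) := by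
  obtain ⟨m, rfl⟩ : ∃ m, n = m + 2 := ⟨n - 2, by omega⟩
  have hFeq : F = Fset m := hF
  subst hFeq
  constructor
  · have equiv := partitionComponentsEquiv (PF m) (isOpen_PF m) (isPreconnected_PF m)
      (PF_disjoint m) (PF_cover m) (PF_nonempty m)
    rw [Nat.card_congr equiv, Nat.card_eq_fintype_card, Fintype.card_perm, Fintype.card_fin]
  · intro q
    obtain ⟨e, he⟩ := PF_cover m q
    rw [partition_connectedComponent (PF m) (isOpen_PF m) (isPreconnected_PF m)
      (PF_disjoint m) (PF_cover m) e q he]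
    exact ⟨homeoPF m e⟩
end

section
/- Let n ≥ 1 and consider the subset R of (ℝ∖{0})^n consisting of all z = (z_1, …, z_n) such that ∏_{l=i}^{j} z_l ≠ 1 for all 1 ≤ i ≤ j ≤ n. Then R has exactly (n+2)!/2 connected components, each homeomorphic to ℝ^n; in particular the Euler characteristic of R is (n+2)!/2. (R is the fixed-point set T_{A_n}^{\bar{id}} of complex conjugation on the complement T_{A_n}, in the coordinates z_i = χ(β_i), so E(T_{A_n}^{\bar{id}}) = (n+2)!/2.) -/
open Set Finset Function

namespace Stmt10

noncomputable section

variable {n : ℕ}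

/-- extend `z` by `1` outside its range -/
def ze (z : Fin n → ℝ) (k : ℕ) : ℝ := if h : k < n then z ⟨k, h⟩ else 1

/-- partial products -/
def W (z : Fin n → ℝ) (k : ℕ) : ℝ := ∏ j ∈ Finset.range k, ze z j

/-- non-dependent `Fin.cons` -/
def consR (a : ℝ) (w : Fin n → ℝ) : Fin (n + 1) → ℝ := Fin.cons a w

@[simp] lemma consR_zero (a : ℝ) (w : Fin n → ℝ) : consR a w 0 = a := rfl

@[simp] lemma consR_succ (a : ℝ) (w : Fin n → ℝ) (i : Fin n) : consR a w i.succ = w i := by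
  simp [consR]

lemma ze_ne_zero {z : Fin n → ℝ} (hz : ∀ i, z i ≠ 0) (k : ℕ) : ze z k ≠ 0 := by
  unfold ze; split
  · exact hz _
  · exact one_ne_zero

lemma W_ne_zero {z : Fin n → ℝ} (hz : ∀ i, z i ≠ 0) (k : ℕ) : W z k ≠ 0 :=
  Finset.prod_ne_zero_iff.mpr fun j _ => ze_ne_zero hz j

lemma prod_Icc_eq (z : Fin n → ℝ) (i j : Fin n) :
    ∏ l ∈ Finset.Icc i j, z l = ∏ k ∈ Finset.Ico (i : ℕ) ((j : ℕ) + 1), ze z k := by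
  rw [Finset.Ico_add_one_right_eq_Icc, ← Fin.map_valEmbedding_Icc, Finset.prod_map]
  refine Finset.prod_congr rfl fun l _ => ?_
  simp [ze, Fin.valEmbedding, l.isLt]

lemma W_mul (z : Fin n → ℝ) {i j : Fin n} (hij : i ≤ j) :
    W z ((j : ℕ) + 1) = W z (i : ℕ) * ∏ l ∈ Finset.Icc i j, z l := by
  rw [prod_Icc_eq, W, W, Finset.prod_range_mul_prod_Ico (ze z) (by omega : (i : ℕ) ≤ (j : ℕ) + 1)]

def Phi (z : Fin n → ℝ) : Fin n → ℝ := fun i => W z ((i : ℕ) + 1)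

def Psi (w : Fin n → ℝ) : Fin n → ℝ := fun i => w i / consR 1 w (Fin.castSucc i)

lemma consR_castSucc_zero (a : ℝ) (w : Fin n → ℝ) (i : Fin n) (h : (i : ℕ) = 0) :
    consR a w (Fin.castSucc i) = a := by
  have h0 : Fin.castSucc i = 0 := by
    apply Fin.ext; simpa using h
  rw [h0, consR_zero]

lemma consR_castSucc_pos (a : ℝ) (w : Fin n → ℝ) (i : Fin n) (m : ℕ) (hm : (i : ℕ) = m + 1)
    (hmn : m < n) : consR a w (Fin.castSucc i) = w ⟨m, hmn⟩ := by
  have h0 : Fin.castSucc i = Fin.succ ⟨m, hmn⟩ := by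
    apply Fin.ext; simpa using hm
  rw [h0, consR_succ]

lemma Phi_Psi_aux {w : Fin n → ℝ} (hw : ∀ i, w i ≠ 0) :
    ∀ k : ℕ, ∀ h : k < n, W (Psi w) (k + 1) = w ⟨k, h⟩ := by
  intro k
  induction k with
  | zero =>
    intro h
    rw [W, Finset.prod_range_one]
    have hz : ze (Psi w) 0 = Psi w ⟨0, h⟩ := by
      unfold ze; rw [dif_pos h]
    rw [hz]
    unfold Psi
    rw [consR_castSucc_zero _ _ _ rfl, div_one]
  | succ m ih =>
    intro h
    have hmn : m < n := by omega
    have step : W (Psi w) (m + 1 + 1) = W (Psi w) (m + 1) * ze (Psi w) (m + 1) := by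
      rw [W, W, Finset.prod_range_succ]
    rw [step, ih hmn]
    have hz : ze (Psi w) (m + 1) = Psi w ⟨m + 1, h⟩ := by
      unfold ze; rw [dif_pos h]
    rw [hz]
    unfold Psi
    rw [consR_castSucc_pos 1 w ⟨m + 1, h⟩ m rfl hmn]
    rw [mul_comm, div_mul_cancel₀ _ (hw ⟨m, hmn⟩)]

lemma Phi_Psi {w : Fin n → ℝ} (hw : ∀ i, w i ≠ 0) : Phi (Psi w) = w := by
  funext i
  have := Phi_Psi_aux hw (i : ℕ) i.isLt
  simpa [Phi] using this

lemma Psi_Phi {z : Fin n → ℝ} (hz : ∀ i, z i ≠ 0) : Psi (Phi z) = z := by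
  funext i
  unfold Psi
  rcases Nat.eq_zero_or_pos (i : ℕ) with h0 | hpos
  · rw [consR_castSucc_zero _ _ _ h0, div_one]
    show W z ((i : ℕ) + 1) = z i
    rw [h0, W, Finset.prod_range_one]
    unfold ze
    rw [dif_pos (by omega : 0 < n)]
    congr 1
    exact Fin.ext h0.symm
  · obtain ⟨m, him⟩ : ∃ m, (i : ℕ) = m + 1 := ⟨(i : ℕ) - 1, by omega⟩
    have hmn : m < n := by have := i.isLt; omega
    rw [consR_castSucc_pos _ _ _ m him hmn]
    show W z ((i : ℕ) + 1) / Phi z ⟨m, hmn⟩ = z i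
    rw [him]
    show W z (m + 1 + 1) / W z (m + 1) = z i
    rw [W, Finset.prod_range_succ, ← W]
    rw [mul_comm, mul_div_assoc, div_self (W_ne_zero hz (m + 1)), mul_one]
    unfold ze
    rw [dif_pos (him ▸ i.isLt)]
    congr 1
    exact Fin.ext him.symm

/-- the target set: pairwise distinct coordinates avoiding 0 and 1 -/
def Sset (n : ℕ) : Set (Fin n → ℝ) :=
  {w | (∀ i, w i ≠ 0 ∧ w i ≠ 1) ∧ ∀ i j : Fin n, i < j → w i ≠ w j}

def Rset (n : ℕ) : Set (Fin n → ℝ) :=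
  {z : Fin n → ℝ | (∀ i, z i ≠ 0) ∧
      (∀ i j : Fin n, i ≤ j → ∏ l ∈ Finset.Icc i j, z l ≠ 1)}

lemma Phi_mem {z : Fin n → ℝ} (hz : z ∈ Rset n) : Phi z ∈ Sset n := by
  obtain ⟨h0, h1⟩ := hz
  refine ⟨fun i => ⟨W_ne_zero h0 _, ?_⟩, fun i j hij => ?_⟩
  · -- Phi z i ≠ 1
    have hpos : 0 < n := i.pos
    have hle : (⟨0, hpos⟩ : Fin n) ≤ i := by
      simp [Fin.le_def]
    have := W_mul z hle
    rw [show W z ((⟨0, hpos⟩ : Fin n) : ℕ) = 1 by simp [W], one_mul] at this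
    show W z ((i : ℕ) + 1) ≠ 1
    rw [this]
    exact h1 _ _ hle
  · -- distinct
    intro heq
    have hlt : (i : ℕ) + 1 < n := by
      have hj := j.isLt
      have := hij
      rw [Fin.lt_def] at this
      omega
    set i' : Fin n := ⟨(i : ℕ) + 1, hlt⟩ with hi'
    have hle : i' ≤ j := by
      rw [Fin.le_def]
      have := hij; rw [Fin.lt_def] at this
      simpa [hi'] using this
    have hW := W_mul z hle
    have hWi' : W z ((i' : ℕ)) = Phi z i := rfl
    rw [hWi'] at hW
    have : Phi z i * ∏ l ∈ Finset.Icc i' j, z l = Phi z i := by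
      rw [← hW]
      exact heq.symm
    rcases mul_right_eq_self₀.mp this with h | h
    · exact h1 i' j hle h
    · exact W_ne_zero h0 _ h

lemma Psi_mem {w : Fin n → ℝ} (hw : w ∈ Sset n) : Psi w ∈ Rset n := by
  obtain ⟨h01, hdist⟩ := hw
  have hw0 : ∀ i, w i ≠ 0 := fun i => (h01 i).1
  have hPsi0 : ∀ i, Psi w i ≠ 0 := by
    intro i
    unfold Psi
    apply div_ne_zero (hw0 i)
    rcases Nat.eq_zero_or_pos (i : ℕ) with h0 | hpos
    · rw [consR_castSucc_zero _ _ _ h0]; exact one_ne_zero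
    · obtain ⟨m, him⟩ : ∃ m, (i : ℕ) = m + 1 := ⟨(i : ℕ) - 1, by omega⟩
      have hmn : m < n := by have := i.isLt; omega
      rw [consR_castSucc_pos _ _ _ m him hmn]
      exact hw0 _
  refine ⟨hPsi0, fun i j hij hprod => ?_⟩
  have hW := W_mul (Psi w) hij
  have hj : W (Psi w) ((j : ℕ) + 1) = w j := by
    have := Phi_Psi_aux hw0 (j : ℕ) j.isLt
    simpa using this
  rw [hj, hprod, mul_one] at hW
  rcases Nat.eq_zero_or_pos (i : ℕ) with h0 | hpos
  · rw [h0] at hW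
    simp [W] at hW
    exact (h01 j).2 hW
  · obtain ⟨m, him⟩ : ∃ m, (i : ℕ) = m + 1 := ⟨(i : ℕ) - 1, by omega⟩
    have hmn : m < n := by have := i.isLt; omega
    rw [him] at hW
    have := Phi_Psi_aux hw0 m hmn
    rw [this] at hW
    have hlt : (⟨m, hmn⟩ : Fin n) < j := by
      rw [Fin.lt_def]
      have := hij; rw [Fin.le_def] at this
      simp
      omega
    exact hdist _ _ hlt hW.symm


lemma continuous_Phi : Continuous (Phi : (Fin n → ℝ) → (Fin n → ℝ)) := by
  apply continuous_pi
  intro i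
  unfold Phi W
  apply continuous_finset_prod
  intro j _
  by_cases h : j < n
  · simpa [ze, h] using continuous_apply (⟨j, h⟩ : Fin n)
  · simpa [ze, h] using continuous_const

def hRS (n : ℕ) : (Rset n) ≃ₜ (Sset n) where
  toFun z := ⟨Phi z.1, Phi_mem z.2⟩
  invFun w := ⟨Psi w.1, Psi_mem w.2⟩
  left_inv z := Subtype.ext (Psi_Phi z.2.1)
  right_inv w := Subtype.ext (Phi_Psi fun i => (w.2.1 i).1)
  continuous_toFun := by
    apply Continuous.subtype_mk
    exact continuous_Phi.comp continuous_subtype_val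
  continuous_invFun := by
    apply Continuous.subtype_mk
    apply continuous_pi
    intro i
    have hnum : Continuous fun w : (Sset n) => w.1 i :=
      (continuous_apply i).comp continuous_subtype_val
    rcases Nat.eq_zero_or_pos (i : ℕ) with h0 | hpos
    · have hrw : ∀ w : (Sset n), Psi w.1 i = w.1 i := by
        intro w
        show w.1 i / _ = _
        rw [consR_castSucc_zero _ _ _ h0, div_one]
      simpa only [hrw] using hnum
    · obtain ⟨m, him⟩ : ∃ m, (i : ℕ) = m + 1 := ⟨(i : ℕ) - 1, by omega⟩
      have hmn : m < n := by have := i.isLt; omega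
      have hrw : ∀ w : (Sset n), Psi w.1 i = w.1 i / w.1 ⟨m, hmn⟩ := by
        intro w
        show w.1 i / _ = _
        rw [consR_castSucc_pos _ _ _ m him hmn]
      simp only [hrw]
      exact hnum.div ((continuous_apply (⟨m, hmn⟩ : Fin n)).comp continuous_subtype_val)
        fun w => (w.2.1 ⟨m, hmn⟩).1

/-! ### Chambers -/

/-- tuple extended by two constants -/
def ext2 (a b : ℝ) (w : Fin n → ℝ) : Fin (n + 2) → ℝ :=
  Fin.cons a (consR b w)

@[simp] lemma ext2_zero (a b : ℝ) (w : Fin n → ℝ) : ext2 a b w 0 = a := rfl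

lemma one_eq_succ_zero : (1 : Fin (n + 2)) = Fin.succ 0 := by
  apply Fin.ext; simp

@[simp] lemma ext2_one (a b : ℝ) (w : Fin n → ℝ) : ext2 a b w 1 = b := by
  unfold ext2
  rw [one_eq_succ_zero, Fin.cons_succ, consR_zero]

@[simp] lemma ext2_succ_succ (a b : ℝ) (w : Fin n → ℝ) (i : Fin n) :
    ext2 a b w i.succ.succ = w i := by
  unfold ext2
  rw [Fin.cons_succ, consR_succ]

lemma continuous_ext2 (a b : ℝ) (j : Fin (n + 2)) :
    Continuous fun w : Fin n → ℝ => ext2 a b w j := by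
  refine Fin.cases ?_ (fun j' => ?_) j
  · simpa using continuous_const
  · refine Fin.cases ?_ (fun j'' => ?_) j'
    · rw [show ((0 : Fin (n+1)).succ : Fin (n+2)) = 1 from one_eq_succ_zero.symm]
      simpa using continuous_const
    · simpa using continuous_apply j''

/-- open chamber associated with an ordering of the `n+2` values -/
def cham (a b : ℝ) (σ : Equiv.Perm (Fin (n + 2))) : Set (Fin n → ℝ) :=
  {w | StrictMono fun k => ext2 a b w (σ k)}

lemma isOpen_cham (a b : ℝ) (σ : Equiv.Perm (Fin (n + 2))) : IsOpen (cham a b σ) := by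
  have hset : cham a b σ =
      ⋂ p : Fin (n + 1), {w | ext2 a b w (σ p.castSucc) < ext2 a b w (σ p.succ)} := by
    ext w
    simp only [cham, mem_setOf_eq, mem_iInter, Fin.strictMono_iff_lt_succ]
  rw [hset]
  exact isOpen_iInter_of_finite fun p =>
    isOpen_lt (continuous_ext2 a b (σ p.castSucc)) (continuous_ext2 a b (σ p.succ))

lemma ext2_combo (a b : ℝ) (w₁ w₂ : Fin n → ℝ) {s t : ℝ} (hst : s + t = 1) (j : Fin (n + 2)) :
    ext2 a b (s • w₁ + t • w₂) j = s * ext2 a b w₁ j + t * ext2 a b w₂ j := by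
  refine Fin.cases ?_ (fun j' => ?_) j
  · simp only [ext2_zero]; linear_combination (-a) * hst
  · refine Fin.cases ?_ (fun j'' => ?_) j'
    · rw [show ((0 : Fin (n+1)).succ : Fin (n+2)) = 1 from one_eq_succ_zero.symm]
      simp only [ext2_one]; linear_combination (-b) * hst
    · simp [ext2_succ_succ]

lemma convex_cham (a b : ℝ) (σ : Equiv.Perm (Fin (n + 2))) : Convex ℝ (cham a b σ) := by
  intro w₁ h₁ w₂ h₂ s t hs ht hst
  have h₁' : StrictMono fun k => ext2 a b w₁ (σ k) := h₁
  have h₂' : StrictMono fun k => ext2 a b w₂ (σ k) := h₂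
  intro k l hkl
  have e₁ := ext2_combo a b w₁ w₂ hst (σ k)
  have e₂ := ext2_combo a b w₁ w₂ hst (σ l)
  show ext2 a b (s • w₁ + t • w₂) (σ k) < ext2 a b (s • w₁ + t • w₂) (σ l)
  rw [e₁, e₂]
  rcases eq_or_lt_of_le hs with hs0 | hs0
  · have ht1 : t = 1 := by linarith
    rw [← hs0, ht1]
    have := h₂' hkl
    simpa using this
  · have hl1 := mul_lt_mul_of_pos_left (h₁' hkl) hs0
    have hl2 := mul_le_mul_of_nonneg_left (h₂' hkl).le ht
    linarith

lemma cham_subset_Sset (σ : Equiv.Perm (Fin (n + 2))) : cham 0 1 σ ⊆ Sset n := by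
  intro w hw
  have hw' : StrictMono fun k => ext2 0 1 w (σ k) := hw
  have hinj : Function.Injective (ext2 0 1 w) := by
    intro x y hxy
    have := hw'.injective (a₁ := σ.symm x) (a₂ := σ.symm y) (by simpa using hxy)
    simpa using congrArg σ this
  refine ⟨fun i => ⟨?_, ?_⟩, fun i j hij => ?_⟩
  · intro h
    have : ext2 0 1 w i.succ.succ = ext2 0 1 w 0 := by simp [h]
    exact (Fin.succ_ne_zero _) (hinj this)
  · intro h
    have : ext2 0 1 w i.succ.succ = ext2 0 1 w 1 := by simp [h]
    have h2 := hinj this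
    have hne : (i.succ.succ : Fin (n+2)) ≠ 1 := by
      intro hh
      have := congrArg Fin.val hh
      simp at this
    exact hne h2
  · intro h
    have : ext2 0 1 w i.succ.succ = ext2 0 1 w j.succ.succ := by simp [h]
    have h2 := hinj this
    have hij' : i = j := by
      have := congrArg Fin.val h2
      simp at this
      exact Fin.ext this
    exact absurd hij' (ne_of_lt hij)

lemma inj_ext2 {w : Fin n → ℝ} (hw : w ∈ Sset n) : Function.Injective (ext2 0 1 w) := by
  obtain ⟨h01, hdist⟩ := hw
  have hwinj : Function.Injective w := by
    intro i j hij
    rcases lt_trichotomy i j with h | h | h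
    · exact absurd hij (hdist i j h)
    · exact h
    · exact absurd hij.symm (hdist j i h)
  rw [ext2, Fin.cons_injective_iff]
  constructor
  · rw [show (consR 1 w : Fin (n+1) → ℝ) = Fin.cons 1 w from rfl, Fin.range_cons]
    intro hmem
    rcases hmem with h | h
    · exact one_ne_zero h.symm
    · obtain ⟨i, hi⟩ := h
      exact (h01 i).1 hi
  · rw [show (consR 1 w : Fin (n+1) → ℝ) = Fin.cons 1 w from rfl, Fin.cons_injective_iff]
    constructor
    · intro hmem
      obtain ⟨i, hi⟩ := hmem
      exact (h01 i).2 hi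
    · exact hwinj

lemma exists_cham {w : Fin n → ℝ} (hw : w ∈ Sset n) :
    ∃ σ : Equiv.Perm (Fin (n + 2)), w ∈ cham 0 1 σ := by
  refine ⟨Tuple.sort (ext2 0 1 w), ?_⟩
  have hmono := Tuple.monotone_sort (ext2 0 1 w)
  have hinj : Function.Injective (ext2 0 1 w ∘ Tuple.sort (ext2 0 1 w)) :=
    (inj_ext2 hw).comp (Equiv.injective _)
  exact hmono.strictMono_of_injective hinj

lemma cham_unique {w : Fin n → ℝ} {σ τ : Equiv.Perm (Fin (n + 2))}
    (h1 : w ∈ cham 0 1 σ) (h2 : w ∈ cham 0 1 τ) : σ = τ := by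
  have h1' : StrictMono (ext2 0 1 w ∘ σ) := h1
  have h2' : StrictMono (ext2 0 1 w ∘ τ) := h2
  have hr1 : Set.range (ext2 0 1 w ∘ σ) = Set.range (ext2 0 1 w) := by
    rw [Set.range_comp, Equiv.range_eq_univ, Set.image_univ]
  have hr2 : Set.range (ext2 0 1 w ∘ τ) = Set.range (ext2 0 1 w) := by
    rw [Set.range_comp, Equiv.range_eq_univ, Set.image_univ]
  haveI : WellFoundedLT (Fin (n + 2)) := inferInstance
  have heq : ext2 0 1 w ∘ σ = ext2 0 1 w ∘ τ :=
    (StrictMono.range_inj h1' h2').mp (hr1.trans hr2.symm)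
  have hinj : Function.Injective (ext2 0 1 w) := by
    intro x y hxy
    have := h1'.injective (a₁ := σ.symm x) (a₂ := σ.symm y)
      (by simp only [Function.comp_apply, Equiv.apply_symm_apply]; exact hxy)
    simpa using congrArg σ this
  exact Equiv.ext fun k => hinj (congrFun heq k)

/-- canonical point of the chamber of `σ` -/
def chamPt (σ : Equiv.Perm (Fin (n + 2))) : Fin n → ℝ := fun k =>
  (((σ.symm k.succ.succ : Fin (n + 2)) : ℝ) - ((σ.symm 0 : Fin (n + 2)) : ℝ)) /
    (((σ.symm 1 : Fin (n + 2)) : ℝ) - ((σ.symm 0 : Fin (n + 2)) : ℝ))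

lemma chamPt_mem {σ : Equiv.Perm (Fin (n + 2))} (h : σ.symm 0 < σ.symm 1) :
    chamPt σ ∈ cham 0 1 σ := by
  set c : ℝ := ((σ.symm 0 : Fin (n + 2)) : ℝ) with hc
  set d : ℝ := ((σ.symm 1 : Fin (n + 2)) : ℝ) - c with hd
  have hdpos : 0 < d := by
    rw [hd, sub_pos, hc]
    exact_mod_cast h
  set f : Fin (n + 2) → ℝ := fun j => ((j : ℝ) - c) / d with hf
  have hfmono : StrictMono f := by
    intro x y hxy
    rw [hf]
    apply div_lt_div_of_pos_right ?_ hdpos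
    have : (x : ℝ) < (y : ℝ) := by exact_mod_cast hxy
    linarith
  have hkey : ∀ j, ext2 0 1 (chamPt σ) j = f (σ.symm j) := by
    intro j
    refine Fin.cases ?_ (fun j' => ?_) j
    · simp [hf, hc]
    · refine Fin.cases ?_ (fun j'' => ?_) j'
      · rw [show ((0 : Fin (n+1)).succ : Fin (n+2)) = 1 from one_eq_succ_zero.symm]
        rw [ext2_one, hf]
        field_simp
        exact hd
      · rw [ext2_succ_succ]
        rfl
  show StrictMono fun k => ext2 0 1 (chamPt σ) (σ k)
  have heq : (fun k => ext2 0 1 (chamPt σ) (σ k)) = f := by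
    funext k
    rw [hkey (σ k), Equiv.symm_apply_apply]
  rw [heq]
  exact hfmono

lemma cham_admissible {w : Fin n → ℝ} {σ : Equiv.Perm (Fin (n + 2))} (hw : w ∈ cham 0 1 σ) :
    σ.symm 0 < σ.symm 1 := by
  have h : StrictMono fun k => ext2 0 1 w (σ k) := hw
  have hlt : (fun k => ext2 0 1 w (σ k)) (σ.symm 0) < (fun k => ext2 0 1 w (σ k)) (σ.symm 1) := by
    simp only [Equiv.apply_symm_apply, ext2_zero, ext2_one]
    norm_num
  exact h.lt_iff_lt.mp hlt


/-! ### Transform to a bounded chamber -/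

def qmap (x : ℝ) : ℝ := x / (1 + |x|)
def pmap (y : ℝ) : ℝ := y / (1 - |y|)

lemma one_add_abs_pos (x : ℝ) : 0 < 1 + |x| := by positivity

lemma qmap_strictMono : StrictMono qmap := by
  intro x y hxy
  unfold qmap
  rw [div_lt_div_iff₀ (one_add_abs_pos x) (one_add_abs_pos y)]
  rcases abs_cases x with ⟨hx, hx'⟩ | ⟨hx, hx'⟩ <;>
    rcases abs_cases y with ⟨hy, hy'⟩ | ⟨hy, hy'⟩ <;> nlinarith

lemma abs_qmap_lt_one (x : ℝ) : |qmap x| < 1 := by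
  unfold qmap
  rw [abs_div, abs_of_pos (one_add_abs_pos x), div_lt_one (one_add_abs_pos x)]
  linarith

lemma pmap_qmap (x : ℝ) : pmap (qmap x) = x := by
  have h : (0:ℝ) < 1 + |x| := one_add_abs_pos x
  unfold pmap qmap
  rw [abs_div, abs_of_pos h]
  have h2 : 1 - |x| / (1 + |x|) = 1 / (1 + |x|) := by field_simp; ring
  rw [h2]; field_simp

lemma qmap_pmap {y : ℝ} (hy : |y| < 1) : qmap (pmap y) = y := by
  have h1 : (0:ℝ) < 1 - |y| := by linarith
  unfold qmap pmap
  rw [abs_div, abs_of_pos h1]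
  have h2 : 1 + |y| / (1 - |y|) = 1 / (1 - |y|) := by field_simp; ring
  rw [h2]; field_simp

lemma qmap_zero : qmap 0 = 0 := by simp [qmap]

lemma qmap_one : qmap 1 = 1/2 := by unfold qmap; rw [abs_one]; norm_num

lemma continuous_qmap : Continuous qmap := by
  unfold qmap
  exact continuous_id.div (continuous_const.add continuous_abs)
    fun x => (one_add_abs_pos x).ne'

def box (n : ℕ) : Set (Fin n → ℝ) := Set.pi Set.univ fun _ => Ioo (-1 : ℝ) 1

lemma isOpen_box : IsOpen (box n) := isOpen_set_pi finite_univ fun _ _ => isOpen_Ioo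

lemma convex_box : Convex ℝ (box n) := convex_pi fun _ _ => convex_Ioo _ _

def cham' (σ : Equiv.Perm (Fin (n + 2))) : Set (Fin n → ℝ) := cham 0 (1/2) σ ∩ box n

lemma Qmap_mem {σ : Equiv.Perm (Fin (n + 2))} {w : Fin n → ℝ} (hw : w ∈ cham 0 1 σ) :
    (fun i => qmap (w i)) ∈ cham' σ := by
  have hkey : ∀ j, ext2 0 (1/2) (fun i => qmap (w i)) j = qmap (ext2 0 1 w j) := by
    intro j
    refine Fin.cases ?_ (fun j' => ?_) j
    · rw [ext2_zero, ext2_zero, qmap_zero]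
    · refine Fin.cases ?_ (fun j'' => ?_) j'
      · rw [show ((0 : Fin (n+1)).succ : Fin (n+2)) = 1 from one_eq_succ_zero.symm]
        rw [ext2_one, ext2_one, qmap_one]
      · rw [ext2_succ_succ, ext2_succ_succ]
  constructor
  · have hw' : StrictMono fun k => ext2 0 1 w (σ k) := hw
    show StrictMono fun k => ext2 0 (1/2) (fun i => qmap (w i)) (σ k)
    have heq : (fun k => ext2 0 (1/2) (fun i => qmap (w i)) (σ k))
        = fun k => qmap (ext2 0 1 w (σ k)) := funext fun k => hkey (σ k)
    rw [heq]
    exact qmap_strictMono.comp hw'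
  · intro i _
    exact abs_lt.mp (abs_qmap_lt_one (w i))

lemma Pmap_mem {σ : Equiv.Perm (Fin (n + 2))} {v : Fin n → ℝ} (hv : v ∈ cham' σ) :
    (fun i => pmap (v i)) ∈ cham 0 1 σ := by
  obtain ⟨hv1, hv2⟩ := hv
  have hbox : ∀ i, |v i| < 1 := fun i =>
    abs_lt.mpr ⟨(hv2 i (mem_univ i)).1, (hv2 i (mem_univ i)).2⟩
  have hv1' : StrictMono fun k => ext2 0 (1/2) v (σ k) := hv1
  have hkey : ∀ j, qmap (ext2 0 1 (fun i => pmap (v i)) j) = ext2 0 (1/2) v j := by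
    intro j
    refine Fin.cases ?_ (fun j' => ?_) j
    · rw [ext2_zero, ext2_zero, qmap_zero]
    · refine Fin.cases ?_ (fun j'' => ?_) j'
      · rw [show ((0 : Fin (n+1)).succ : Fin (n+2)) = 1 from one_eq_succ_zero.symm]
        rw [ext2_one, ext2_one, qmap_one]
      · rw [ext2_succ_succ, ext2_succ_succ]
        exact qmap_pmap (hbox j'')
  show StrictMono fun k => ext2 0 1 (fun i => pmap (v i)) (σ k)
  intro k l hkl
  apply qmap_strictMono.lt_iff_lt.mp
  show qmap (ext2 0 1 (fun i => pmap (v i)) (σ k)) < qmap (ext2 0 1 (fun i => pmap (v i)) (σ l))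
  rw [hkey (σ k), hkey (σ l)]
  exact hv1' hkl

def chamHomeo (σ : Equiv.Perm (Fin (n + 2))) :
    (cham 0 1 σ : Set (Fin n → ℝ)) ≃ₜ (cham' σ : Set (Fin n → ℝ)) where
  toFun w := ⟨fun i => qmap (w.1 i), Qmap_mem w.2⟩
  invFun v := ⟨fun i => pmap (v.1 i), Pmap_mem v.2⟩
  left_inv w := Subtype.ext (funext fun i => pmap_qmap (w.1 i))
  right_inv v := Subtype.ext (funext fun i =>
    qmap_pmap (abs_lt.mpr ⟨(v.2.2 i (mem_univ i)).1, (v.2.2 i (mem_univ i)).2⟩))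
  continuous_toFun := by
    apply Continuous.subtype_mk
    exact continuous_pi fun i =>
      continuous_qmap.comp ((continuous_apply i).comp continuous_subtype_val)
  continuous_invFun := by
    apply Continuous.subtype_mk
    apply continuous_pi
    intro i
    have hc : Continuous fun v : (cham' σ) => v.1 i :=
      (continuous_apply i).comp continuous_subtype_val
    have habs : ∀ v : (cham' σ), |v.1 i| < 1 := fun v =>
      abs_lt.mpr ⟨(v.2.2 i (mem_univ i)).1, (v.2.2 i (mem_univ i)).2⟩
    show Continuous fun v : (cham' σ) => pmap (v.1 i)
    unfold pmap
    exact hc.div (continuous_const.sub hc.abs)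
      fun v => sub_ne_zero.mpr (ne_of_lt (habs v)).symm

lemma isBounded_cham' (σ : Equiv.Perm (Fin (n + 2))) : Bornology.IsBounded (cham' σ) := by
  apply (Metric.isBounded_closedBall (x := (0 : Fin n → ℝ)) (r := 1)).subset
  intro v hv
  rw [Metric.mem_closedBall, dist_zero_right]
  rw [pi_norm_le_iff_of_nonneg (by norm_num : (0:ℝ) ≤ 1)]
  intro i
  have hmem := hv.2 i (mem_univ i)
  rw [Real.norm_eq_abs]
  exact le_of_lt (abs_lt.mpr ⟨hmem.1, hmem.2⟩)

lemma nonempty_homeo_cham' {σ : Equiv.Perm (Fin (n + 2))}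
    (hne : (cham' σ : Set (Fin n → ℝ)).Nonempty) :
    Nonempty ((cham' σ : Set (Fin n → ℝ)) ≃ₜ (Fin n → ℝ)) := by
  have hopen : IsOpen (cham' σ) := (isOpen_cham _ _ _).inter isOpen_box
  have hconv : Convex ℝ (cham' σ) := (convex_cham _ _ _).inter convex_box
  have hint : interior (cham' σ) = cham' σ := hopen.interior_eq
  obtain ⟨h2, h2i, -, -⟩ := exists_homeomorph_image_interior_closure_frontier_eq_unitBall
    hconv (by rw [hint]; exact hne) (isBounded_cham' σ)
  rw [hint] at h2i
  exact ⟨(h2.image (cham' σ)).trans ((Homeomorph.setCongr h2i).trans Homeomorph.unitBall.symm)⟩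

lemma nonempty_homeo_cham {σ : Equiv.Perm (Fin (n + 2))} (hadm : σ.symm 0 < σ.symm 1) :
    Nonempty ((cham 0 1 σ : Set (Fin n → ℝ)) ≃ₜ (Fin n → ℝ)) := by
  have hne : (cham' σ : Set (Fin n → ℝ)).Nonempty := ⟨_, Qmap_mem (chamPt_mem hadm)⟩
  obtain ⟨e⟩ := nonempty_homeo_cham' hne
  exact ⟨(chamHomeo σ).trans e⟩


/-! ### Connected components of `Sset` -/

def Dset (n : ℕ) (σ : Equiv.Perm (Fin (n + 2))) : Set (Sset n) :=
  Subtype.val ⁻¹' cham 0 1 σ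

lemma isOpen_Dset (σ : Equiv.Perm (Fin (n + 2))) : IsOpen (Dset n σ) :=
  (isOpen_cham 0 1 σ).preimage continuous_subtype_val

lemma isClosed_Dset (σ : Equiv.Perm (Fin (n + 2))) : IsClosed (Dset n σ) := by
  rw [← isOpen_compl_iff]
  have hcompl : (Dset n σ)ᶜ = ⋃ τ : Equiv.Perm (Fin (n + 2)), ⋃ _ : τ ≠ σ, Dset n τ := by
    ext x
    simp only [mem_compl_iff, mem_iUnion]
    constructor
    · intro hx
      obtain ⟨τ, hτ⟩ := exists_cham x.2
      exact ⟨τ, fun h => hx (h ▸ hτ), hτ⟩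
    · rintro ⟨τ, hne, hmem⟩ hx
      exact hne (cham_unique hmem hx)
  rw [hcompl]
  exact isOpen_iUnion fun τ => isOpen_iUnion fun _ => isOpen_Dset τ

lemma isPreconnected_Dset (σ : Equiv.Perm (Fin (n + 2))) : IsPreconnected (Dset n σ) := by
  rw [← Topology.IsInducing.subtypeVal.isPreconnected_image]
  have himg : (Subtype.val '' Dset n σ : Set (Fin n → ℝ)) = cham 0 1 σ := by
    show Subtype.val '' (Subtype.val ⁻¹' cham 0 1 σ) = cham 0 1 σ
    rw [Subtype.image_preimage_coe]
    exact inter_eq_self_of_subset_right (cham_subset_Sset σ)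
  rw [himg]
  exact (convex_cham 0 1 σ).isPreconnected

lemma connectedComponent_eq_Dset {σ : Equiv.Perm (Fin (n + 2))} (x : (Sset n))
    (hx : (x : Fin n → ℝ) ∈ cham 0 1 σ) : connectedComponent x = Dset n σ := by
  apply Set.Subset.antisymm
  · exact IsClopen.connectedComponent_subset ⟨isClosed_Dset σ, isOpen_Dset σ⟩ hx
  · exact (isPreconnected_Dset σ).subset_connectedComponent hx

def sigOf (x : (Sset n)) : Equiv.Perm (Fin (n + 2)) := (exists_cham x.2).choose

lemma sigOf_mem (x : (Sset n)) : (x : Fin n → ℝ) ∈ cham 0 1 (sigOf x) :=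
  (exists_cham x.2).choose_spec

/-- admissible orderings: `0` comes before `1` -/
abbrev Adm (n : ℕ) := {σ : Equiv.Perm (Fin (n + 2)) // σ.symm 0 < σ.symm 1}

def admPt (σ : Adm n) : (Sset n) :=
  ⟨chamPt σ.1, cham_subset_Sset σ.1 (chamPt_mem σ.2)⟩

lemma adm_bijective :
    Function.Bijective fun σ : Adm n => ConnectedComponents.mk (admPt σ) := by
  constructor
  · intro s t h
    have h' : connectedComponent (admPt s) = connectedComponent (admPt t) :=
      ConnectedComponents.coe_eq_coe.mp h
    rw [connectedComponent_eq_Dset (admPt s) (chamPt_mem s.2)] at h'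
    have hmem : admPt t ∈ Dset n s.1 := by
      rw [h']
      exact mem_connectedComponent
    exact Subtype.ext (cham_unique hmem (chamPt_mem t.2))
  · intro c
    obtain ⟨x, rfl⟩ := ConnectedComponents.surjective_coe c
    have hadm : (sigOf x).symm 0 < (sigOf x).symm 1 := cham_admissible (sigOf_mem x)
    refine ⟨⟨sigOf x, hadm⟩, ?_⟩
    apply ConnectedComponents.coe_eq_coe.mpr
    rw [connectedComponent_eq_Dset (admPt ⟨sigOf x, hadm⟩) (chamPt_mem hadm),
      connectedComponent_eq_Dset x (sigOf_mem x)]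

def admEquiv (n : ℕ) : Adm n ≃ ConnectedComponents (Sset n) :=
  Equiv.ofBijective _ adm_bijective

/-! ### counting admissible orderings -/

lemma zero_ne_one_fin : (0 : Fin (n + 2)) ≠ 1 := by
  intro h
  have := congrArg Fin.val h
  simp at this

lemma swap_mul_symm_zero (σ : Equiv.Perm (Fin (n + 2))) :
    (Equiv.swap 0 1 * σ).symm 0 = σ.symm 1 := by
  simp [Equiv.Perm.mul_def, Equiv.symm_trans_apply]

lemma swap_mul_symm_one (σ : Equiv.Perm (Fin (n + 2))) :
    (Equiv.swap 0 1 * σ).symm 1 = σ.symm 0 := by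
  simp [Equiv.Perm.mul_def, Equiv.symm_trans_apply]

lemma symm_zero_ne_symm_one (σ : Equiv.Perm (Fin (n + 2))) : σ.symm 0 ≠ σ.symm 1 :=
  fun h => zero_ne_one_fin (σ.symm.injective h)

def flipEquiv (n : ℕ) :
    {σ : Equiv.Perm (Fin (n + 2)) // ¬ σ.symm 0 < σ.symm 1} ≃ Adm n where
  toFun σ := ⟨Equiv.swap 0 1 * σ.1, by
    rw [swap_mul_symm_zero, swap_mul_symm_one]
    rcases lt_or_gt_of_ne (symm_zero_ne_symm_one σ.1) with h | h
    · exact absurd h σ.2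
    · exact h⟩
  invFun τ := ⟨Equiv.swap 0 1 * τ.1, by
    rw [swap_mul_symm_zero, swap_mul_symm_one]
    exact asymm τ.2⟩
  left_inv σ := Subtype.ext (by
    show Equiv.swap 0 1 * (Equiv.swap 0 1 * σ.1) = σ.1
    rw [← mul_assoc, Equiv.swap_mul_self, one_mul])
  right_inv τ := Subtype.ext (by
    show Equiv.swap 0 1 * (Equiv.swap 0 1 * τ.1) = τ.1
    rw [← mul_assoc, Equiv.swap_mul_self, one_mul])

lemma card_Adm (n : ℕ) : 2 * Nat.card (Adm n) = Nat.factorial (n + 2) := by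
  have hflip : Nat.card {σ : Equiv.Perm (Fin (n + 2)) // ¬ σ.symm 0 < σ.symm 1}
      = Nat.card (Adm n) := Nat.card_congr (flipEquiv n)
  have htot : Nat.card (Adm n)
      + Nat.card {σ : Equiv.Perm (Fin (n + 2)) // ¬ σ.symm 0 < σ.symm 1}
      = Nat.card (Equiv.Perm (Fin (n + 2))) := by
    rw [← Nat.card_sum]
    exact Nat.card_congr (Equiv.sumCompl fun σ : Equiv.Perm (Fin (n + 2)) =>
      σ.symm 0 < σ.symm 1)
  have hperm : Nat.card (Equiv.Perm (Fin (n + 2))) = Nat.factorial (n + 2) := by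
    rw [Nat.card_eq_fintype_card, Fintype.card_perm, Fintype.card_fin]
  omega

/-! ### transferring along a homeomorphism -/

lemma homeo_image_connectedComponent {X Y : Type*} [TopologicalSpace X] [TopologicalSpace Y]
    (h : X ≃ₜ Y) (x : X) : h '' connectedComponent x = connectedComponent (h x) := by
  rw [← connectedComponentIn_univ x, h.image_connectedComponentIn (mem_univ x),
    image_univ, h.surjective.range_eq, connectedComponentIn_univ]

lemma homeo_cc_eq_iff {X Y : Type*} [TopologicalSpace X] [TopologicalSpace Y]
    (h : X ≃ₜ Y) (a b : X) :
    connectedComponent a = connectedComponent b ↔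
      connectedComponent (h a) = connectedComponent (h b) := by
  constructor
  · intro hab
    rw [← homeo_image_connectedComponent h a, ← homeo_image_connectedComponent h b, hab]
  · intro hab
    have h1 := homeo_image_connectedComponent h.symm (h a)
    have h2 := homeo_image_connectedComponent h.symm (h b)
    rw [h.symm_apply_apply] at h1
    rw [h.symm_apply_apply] at h2
    rw [← h1, ← h2, hab]

def ccEquiv {X Y : Type*} [TopologicalSpace X] [TopologicalSpace Y] (h : X ≃ₜ Y) :
    ConnectedComponents X ≃ ConnectedComponents Y :=
  Quotient.congr h.toEquiv (fun a b => homeo_cc_eq_iff h a b)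

def homeoSub {X : Type*} [TopologicalSpace X] {S C : Set X} (h : C ⊆ S) :
    ((Subtype.val ⁻¹' C : Set S)) ≃ₜ C where
  toFun x := ⟨x.1.1, x.2⟩
  invFun y := ⟨⟨y.1, h y.2⟩, y.2⟩
  left_inv x := Subtype.ext (Subtype.ext rfl)
  right_inv y := Subtype.ext rfl
  continuous_toFun := Continuous.subtype_mk (continuous_subtype_val.comp continuous_subtype_val) _
  continuous_invFun := Continuous.subtype_mk (Continuous.subtype_mk continuous_subtype_val _) _

end

end Stmt10

open Stmt10

/-- The fixed-point set `T_{Aₙ}^{\bar{id}}` of complex conjugation on the complement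
`T_{Aₙ}`, in the coordinates `zᵢ = χ(βᵢ)` (all `zᵢ` real and nonzero, with all consecutive
products `∏_{l=i}^{j} z_l ≠ 1`), has exactly `(n+2)!/2` connected components, each
homeomorphic to `ℝⁿ`; in particular its Euler characteristic is `(n+2)!/2`. -/
theorem stmt_10 (n : ℕ) (hn : 1 ≤ n)
    (R : Set (Fin n → ℝ))
    (hR : R = {z : Fin n → ℝ |
      (∀ i, z i ≠ 0) ∧
      (∀ i j : Fin n, i ≤ j → ∏ l ∈ Finset.Icc i j, z l ≠ 1)}) :
    Nat.card (ConnectedComponents R) = Nat.factorial (n + 2) / 2 ∧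
    ∀ x : R, Nonempty ((connectedComponent x) ≃ₜ (Fin n → ℝ)) := by
  subst hR
  constructor
  · show Nat.card (ConnectedComponents (Rset n)) = Nat.factorial (n + 2) / 2
    rw [Nat.card_congr (ccEquiv (hRS n)), Nat.card_congr (admEquiv n).symm]
    have := card_Adm n
    omega
  · intro x
    show Nonempty ((connectedComponent (x : (Rset n)) : Set (Rset n)) ≃ₜ (Fin n → ℝ))
    set y : (Sset n) := hRS n x with hy
    have hadm : (sigOf y).symm 0 < (sigOf y).symm 1 := cham_admissible (sigOf_mem y)
    obtain ⟨e5⟩ := nonempty_homeo_cham hadm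
    have e1 := (hRS n).image (connectedComponent (x : (Rset n)))
    have e2 : ((hRS n) '' connectedComponent (x : (Rset n)) : Set (Sset n)) ≃ₜ
        (connectedComponent y : Set (Sset n)) :=
      Homeomorph.setCongr (homeo_image_connectedComponent (hRS n) x)
    have e3 : (connectedComponent y : Set (Sset n)) ≃ₜ (Dset n (sigOf y) : Set (Sset n)) :=
      Homeomorph.setCongr (connectedComponent_eq_Dset y (sigOf_mem y))
    have e4 : (Dset n (sigOf y) : Set (Sset n)) ≃ₜ (cham 0 1 (sigOf y) : Set (Fin n → ℝ)) :=
      homeoSub (cham_subset_Sset (sigOf y))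
    exact ⟨e1.trans (e2.trans (e3.trans (e4.trans e5)))⟩
end

section
/- Let S be a finite set of vectors in ℤ^n each of which is a 0-1 vector whose entries equal to 1 are consecutive. Then the subgroup N = ℤ⟨S⟩ of ℤ^n spanned by S is saturated: for every x ∈ ℤ^n and every nonzero integer m, if m·x ∈ N then x ∈ N. (Equivalently, in the language of the paper: if A is a binary matrix of full rank such that the 1's in each row of A are consecutive, then each pivot element in the row reduced echelon matrix over ℤ obtained from A is 1.) -/
lemma core_saturated {V : Type} [Fintype V] [DecidableEq V] (S' : Set (V → ℤ))
    (hS' : ∀ v ∈ S', ∃ a b : V, v = Pi.single a 1 - Pi.single b 1)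
    (x : V → ℤ) (m : ℤ) (hm : m ≠ 0) (hx : m • x ∈ Submodule.span ℤ S') :
    x ∈ Submodule.span ℤ S' := by
  classical
  set N := Submodule.span ℤ S' with hNdef
  let r : V → V → Prop := fun a b => Pi.single a (1:ℤ) - Pi.single b 1 ∈ N
  have path : ∀ a b : V, Quot.mk r a = Quot.mk r b →
      Pi.single a (1:ℤ) - Pi.single b 1 ∈ N := by
    intro a b h
    have h' := Quot.eqvGen_exact h
    clear h
    induction h' with
    | rel a b hab => exact hab
    | refl a => simp
    | symm a b _ ih => have := N.neg_mem ih; rwa [neg_sub] at this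
    | trans a b c _ _ ih1 ih2 =>
        have := N.add_mem ih1 ih2; rwa [sub_add_sub_cancel] at this
  let σ : (V → ℤ) → (Quot r → ℤ) :=
    fun v q => ∑ a ∈ Finset.univ.filter (fun a => Quot.mk r a = q), v a
  have σ_sub : ∀ v w, σ (v - w) = σ v - σ w := by
    intro v w; funext q; simpa [σ] using Finset.sum_sub_distrib
  have σ_single : ∀ (a : V) (q : Quot r),
      σ (Pi.single a (1:ℤ)) q = if Quot.mk r a = q then 1 else 0 := by
    intro a q
    simp only [σ, Pi.single_apply]
    rw [Finset.sum_ite_eq' (Finset.univ.filter (fun b => Quot.mk r b = q)) a (fun _ => (1:ℤ))]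
    simp
  have σ_gen : ∀ a b : V, Pi.single a (1:ℤ) - Pi.single b 1 ∈ N →
      σ (Pi.single a (1:ℤ) - Pi.single b 1) = 0 := by
    intro a b hab
    funext q
    have hq : Quot.mk r a = Quot.mk r b := Quot.sound hab
    rw [σ_sub]
    simp [σ_single, hq]
  have σ_zero : ∀ v ∈ N, σ v = 0 := by
    intro v hv
    induction hv using Submodule.span_induction with
    | mem v hvS =>
        obtain ⟨a, b, rfl⟩ := hS' v hvS
        exact σ_gen a b (Submodule.subset_span hvS)
    | zero => funext q; simp [σ]
    | add v w _ _ ihv ihw =>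
        funext q
        have h1 : σ (v + w) q = σ v q + σ w q := by simp [σ, Finset.sum_add_distrib]
        rw [h1, congrFun ihv q, congrFun ihw q]; simp
    | smul c v _ ihv =>
        funext q
        have h1 : σ (c • v) q = c * σ v q := by simp [σ, Finset.mul_sum]
        rw [h1, congrFun ihv q]; simp
  have step2 : ∀ (k : ℕ) (v : V → ℤ), (∑ a, (v a).natAbs) = k → σ v = 0 → v ∈ N := by
    intro k
    induction k using Nat.strong_induction_on with
    | _ k ih =>
      intro v hk hσ
      by_cases hv0 : v = 0
      · simp [hv0]
      obtain ⟨a, ha⟩ : ∃ a, v a ≠ 0 := by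
        by_contra h; push_neg at h; exact hv0 (funext fun a => h a)
      set q := Quot.mk r a with hq
      set s := Finset.univ.filter (fun b => Quot.mk r b = q) with hs
      have has : a ∈ s := by simp [hs]; rfl
      have hsum : ∑ b ∈ s, v b = 0 := congrFun hσ q
      have hpos : ∃ a' ∈ s, 0 < v a' := by
        by_contra h; push_neg at h
        have h1 : v a < 0 := lt_of_le_of_ne (h a has) ha
        have h2 : ∑ b ∈ s.erase a, v b ≤ 0 :=
          Finset.sum_nonpos (fun b hb => h b (Finset.mem_of_mem_erase hb))
        have h3 := Finset.add_sum_erase s v has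
        linarith
      obtain ⟨a', ha's, ha'⟩ := hpos
      have hneg : ∃ b' ∈ s, v b' < 0 := by
        by_contra h; push_neg at h
        have h2 : 0 ≤ ∑ b ∈ s.erase a', v b :=
          Finset.sum_nonneg (fun b hb => h b (Finset.mem_of_mem_erase hb))
        have h3 := Finset.add_sum_erase s v ha's
        linarith
      obtain ⟨b', hb's, hb'⟩ := hneg
      have hab : a' ≠ b' := by intro hcon; rw [hcon] at ha'; omega
      have hqa' : Quot.mk r a' = q := (Finset.mem_filter.mp ha's).2
      have hqb' : Quot.mk r b' = q := (Finset.mem_filter.mp hb's).2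
      have hgen : Pi.single a' (1:ℤ) - Pi.single b' 1 ∈ N :=
        path a' b' (hqa'.trans hqb'.symm)
      set w := v - (Pi.single a' (1:ℤ) - Pi.single b' 1) with hw
      have hσw : σ w = 0 := by rw [σ_sub, hσ, σ_gen a' b' hgen, sub_zero]
      have hwval : ∀ c, w c = v c - (if c = a' then 1 else 0) + (if c = b' then 1 else 0) := by
        intro c
        simp [hw, Pi.single_apply]
        ring
      have hlt : ∑ c, (w c).natAbs < k := by
        rw [← hk]
        apply Finset.sum_lt_sum
        · intro c _
          have hc := hwval c
          by_cases h1 : c = a'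
          · subst h1; simp [hab] at hc; omega
          by_cases h2 : c = b'
          · subst h2; simp [h1] at hc; omega
          · simp [h1, h2] at hc; omega
        · refine ⟨a', Finset.mem_univ a', ?_⟩
          have hc := hwval a'
          simp [hab] at hc
          omega
      have hwN : w ∈ N := ih _ hlt w rfl hσw
      have : v = w + (Pi.single a' (1:ℤ) - Pi.single b' 1) := by rw [hw]; ring
      rw [this]
      exact N.add_mem hwN hgen
  have hσmx : σ (m • x) = 0 := σ_zero _ hx
  have hσx : σ x = 0 := by
    funext p
    have h1 : σ (m • x) p = m * σ x p := by simp [σ, Finset.mul_sum]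
    have := congrFun hσmx p
    rw [h1] at this
    simp at this
    rcases this with h | h
    · exact absurd h hm
    · simpa using h
  exact step2 _ x rfl hσx


/-- extension of a vector in `ℤⁿ` to `ℕ → ℤ` by zero. -/
private def extz {n : ℕ} (x : Fin n → ℤ) : ℕ → ℤ :=
  fun l => if h : l < n then x ⟨l, h⟩ else 0

/-- the difference map `ℤⁿ → ℤ^{n+1}`. -/
private def dmap (n : ℕ) : (Fin n → ℤ) →ₗ[ℤ] (Fin (n + 1) → ℤ) where
  toFun x := fun k => extz x k - (if (k : ℕ) = 0 then 0 else extz x ((k : ℕ) - 1))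
  map_add' x y := by
    funext k
    have h1 : ∀ l, extz (x + y) l = extz x l + extz y l := by
      intro l; unfold extz; split_ifs <;> simp
    simp only [h1, Pi.add_apply]
    split_ifs <;> ring
  map_smul' c x := by
    funext k
    have h1 : ∀ l, extz (c • x) l = c * extz x l := by
      intro l; unfold extz; split_ifs <;> simp
    simp only [h1, RingHom.id_apply, Pi.smul_apply, smul_eq_mul]
    split_ifs <;> ring

private lemma dmap_inj (n : ℕ) : Function.Injective (dmap n) := by
  rw [injective_iff_map_eq_zero]
  intro x hx
  have key : ∀ l, extz x l = 0 := by
    intro l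
    induction l with
    | zero =>
      have := congrFun hx ⟨0, by omega⟩
      simpa [dmap] using this
    | succ l ih =>
      by_cases hl : l + 1 < n + 1
      · have := congrFun hx ⟨l + 1, hl⟩
        simp only [dmap, LinearMap.coe_mk, AddHom.coe_mk, Pi.zero_apply] at this
        rw [if_neg (by simp)] at this
        simp only [Fin.val_mk, Nat.add_sub_cancel] at this
        omega
      · unfold extz; rw [dif_neg (by omega)]
  funext l
  have := key l
  unfold extz at this
  rw [dif_pos l.isLt] at this
  simpa using this

private lemma dmap_interval (n : ℕ) (s : Fin n → ℤ) (i j : ℕ) (hij : i ≤ j) (hj : j < n)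
    (hs : ∀ l : Fin n, s l = if i ≤ (l : ℕ) ∧ (l : ℕ) ≤ j then 1 else 0) :
    dmap n s = Pi.single (⟨i, by omega⟩ : Fin (n + 1)) 1
      - Pi.single (⟨j + 1, by omega⟩ : Fin (n + 1)) 1 := by
  have hext : ∀ l, extz s l = if i ≤ l ∧ l ≤ j then 1 else 0 := by
    intro l
    unfold extz
    split_ifs with h1 h2 h2
    · rw [hs ⟨l, h1⟩]; simp [h2]
    · rw [hs ⟨l, h1⟩]; simp; omega
    · omega
    · rfl
  funext k
  simp only [dmap, LinearMap.coe_mk, AddHom.coe_mk, hext, Pi.sub_apply, Pi.single_apply,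
    Fin.ext_iff, Fin.val_mk]
  split_ifs <;> omega

/-- Lemma: let `S` be a finite set of `0-1` vectors in `ℤⁿ` whose ones are consecutive
(as for the roots of `Aₙ` expressed in the simple roots).  Then the subgroup
`N = ℤ⟨S⟩` is saturated: whenever a nonzero integer multiple of `x ∈ ℤⁿ` lies in `N`,
already `x ∈ N`. -/
theorem stmt_11 (n : ℕ) (S : Set (Fin n → ℤ)) (hfin : S.Finite)
    (hS : ∀ s ∈ S, ∃ i j : ℕ, i ≤ j ∧ j < n ∧
      ∀ l : Fin n, s l = if i ≤ (l : ℕ) ∧ (l : ℕ) ≤ j then 1 else 0)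
    (N : AddSubgroup (Fin n → ℤ)) (hN : N = AddSubgroup.closure S) :
    ∀ (x : Fin n → ℤ) (m : ℤ), m ≠ 0 → m • x ∈ N → x ∈ N := by
  subst hN
  intro x m hm hx
  rw [← Submodule.span_int_eq_addSubgroupClosure, Submodule.mem_toAddSubgroup] at hx ⊢
  have hD : (dmap n) (m • x) ∈ Submodule.span ℤ ((dmap n) '' S) := by
    rw [← Submodule.map_span]
    exact Submodule.mem_map_of_mem hx
  rw [map_smul] at hD
  have hgen : ∀ v ∈ (dmap n) '' S, ∃ a b : Fin (n + 1),
      v = Pi.single a 1 - Pi.single b 1 := by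
    rintro v ⟨s, hsS, rfl⟩
    obtain ⟨i, j, hij, hj, hs⟩ := hS s hsS
    exact ⟨⟨i, by omega⟩, ⟨j + 1, by omega⟩, dmap_interval n s i j hij hj hs⟩
  have hcore := core_saturated ((dmap n) '' S) hgen (dmap n x) m hm hD
  rw [← Submodule.map_span] at hcore
  obtain ⟨y, hy, hyx⟩ := hcore
  exact (dmap_inj n hyx) ▸ hy
end

section
/- Let n ≥ 1 and let Φ = {e_i − e_j : i ≠ j} ⊆ ℤ^{n+1} be the roots of A_n. For every subset S ⊆ Φ, the subgroup ℤ⟨S⟩ of ℤ^{n+1} is saturated; that is, ℤ⟨S⟩ = span_ℚ(S) ∩ ℤ^{n+1}. Consequently, for any two subsets S, S′ ⊆ Φ, if span_ℚ(S) = span_ℚ(S′) then ℤ⟨S⟩ = ℤ⟨S′⟩, so the map τ : 𝒫(A_n) → 𝒜(A_n), N ↦ N ⊗_ℤ ℚ, from the poset of ℤ-spans of subsets of roots to the poset of ℚ-spans of subsets of roots (each ordered by reverse inclusion), is an isomorphism of posets. -/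
namespace Stmt12Aux

variable {n : ℕ}

/-- Edge relation on the indices coming from `S`. -/
def adjRel (S : Set (Fin (n + 1) → ℤ)) (i j : Fin (n + 1)) : Prop :=
  (Pi.single i 1 - Pi.single j 1 : Fin (n + 1) → ℤ) ∈ S

open Classical in
/-- The set of indices in the connected component `q`. -/
noncomputable def classSet (S : Set (Fin (n + 1) → ℤ)) (q : Quot (adjRel S)) :
    Finset (Fin (n + 1)) :=
  Finset.univ.filter (fun i => Quot.mk (adjRel S) i = q)

lemma mem_classSet {S : Set (Fin (n + 1) → ℤ)} {q : Quot (adjRel S)} {i : Fin (n + 1)} :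
    i ∈ classSet S q ↔ Quot.mk (adjRel S) i = q := by
  simp [classSet]

/-- Sum of the coordinates of `x` over the component `q`. -/
noncomputable def phi (S : Set (Fin (n + 1) → ℤ)) (x : Fin (n + 1) → ℤ)
    (q : Quot (adjRel S)) : ℤ :=
  ∑ i ∈ classSet S q, x i

lemma phi_sub (S : Set (Fin (n + 1) → ℤ)) (x y : Fin (n + 1) → ℤ) (q : Quot (adjRel S)) :
    phi S (x - y) q = phi S x q - phi S y q := by
  simp [phi, Finset.sum_sub_distrib]

lemma single_sub_mem_closure {S : Set (Fin (n + 1) → ℤ)} {i j : Fin (n + 1)}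
    (h : Quot.mk (adjRel S) i = Quot.mk (adjRel S) j) :
    (Pi.single i 1 - Pi.single j 1 : Fin (n + 1) → ℤ) ∈ AddSubgroup.closure S := by
  have h' := Quot.eq.mp h
  clear h
  induction h' with
  | rel a b hab => exact AddSubgroup.subset_closure hab
  | refl a => rw [sub_self]; exact zero_mem _
  | symm a b _ ih => rw [← neg_sub]; exact neg_mem ih
  | trans a b c _ _ ih1 ih2 =>
      have := add_mem ih1 ih2
      rwa [sub_add_sub_cancel] at this

lemma phi_gen (S : Set (Fin (n + 1) → ℤ)) {i j : Fin (n + 1)}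
    (h : Quot.mk (adjRel S) i = Quot.mk (adjRel S) j) (q : Quot (adjRel S)) :
    phi S (Pi.single i 1 - Pi.single j 1) q = 0 := by
  classical
  have hmem : (i ∈ classSet S q) ↔ (j ∈ classSet S q) := by
    rw [mem_classSet, mem_classSet, h]
  simp only [phi, Pi.sub_apply, Finset.sum_sub_distrib,
    Finset.sum_pi_single']
  by_cases hi : i ∈ classSet S q
  · rw [if_pos hi, if_pos (hmem.mp hi), sub_self]
  · rw [if_neg hi, if_neg (fun hj => hi (hmem.mpr hj)), sub_self]

lemma mem_closure_of_phi (S : Set (Fin (n + 1) → ℤ)) :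
    ∀ m (x : Fin (n + 1) → ℤ), (∑ i, (x i).natAbs) = m →
      (∀ q, phi S x q = 0) → x ∈ AddSubgroup.closure S := by
  intro m
  induction m using Nat.strong_induction_on with
  | _ m ih =>
    intro x hm hq
    by_cases hx : x = 0
    · rw [hx]; exact zero_mem _
    · obtain ⟨i, hi⟩ : ∃ i, x i ≠ 0 := by
        by_contra h; push_neg at h; exact hx (funext h)
      have hiT : i ∈ classSet S (Quot.mk (adjRel S) i) := mem_classSet.mpr rfl
      have hTsum : ∑ k ∈ classSet S (Quot.mk (adjRel S) i), x k = 0 := hq _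
      -- find a positive and a negative coordinate in the component of i
      have hpos : ∃ a ∈ classSet S (Quot.mk (adjRel S) i), 0 < x a := by
        by_contra h; push_neg at h
        have hxi : x i < 0 := lt_of_le_of_ne (h i hiT) hi
        have : 0 < ∑ k ∈ classSet S (Quot.mk (adjRel S) i), (-x k) :=
          Finset.sum_pos' (fun k hk => by have := h k hk; linarith)
            ⟨i, hiT, by linarith⟩
        rw [Finset.sum_neg_distrib, hTsum] at this
        omega
      have hneg : ∃ b ∈ classSet S (Quot.mk (adjRel S) i), x b < 0 := by
        by_contra h; push_neg at h
        have hxi : 0 < x i := lt_of_le_of_ne (h i hiT) (Ne.symm hi)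
        have : 0 < ∑ k ∈ classSet S (Quot.mk (adjRel S) i), x k :=
          Finset.sum_pos' (fun k hk => h k hk) ⟨i, hiT, hxi⟩
        omega
      obtain ⟨a, haT, hxa⟩ := hpos
      obtain ⟨b, hbT, hxb⟩ := hneg
      have hab : a ≠ b := by intro h; rw [h] at hxa; omega
      have hclass : Quot.mk (adjRel S) a = Quot.mk (adjRel S) b := by
        rw [mem_classSet.mp haT, mem_classSet.mp hbT]
      set g : Fin (n + 1) → ℤ := Pi.single a 1 - Pi.single b 1 with hg
      have hgmem : g ∈ AddSubgroup.closure S := single_sub_mem_closure hclass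
      set y : Fin (n + 1) → ℤ := x - g with hy
      have hyq : ∀ q, phi S y q = 0 := by
        intro q
        rw [hy, phi_sub, hq, hg, phi_gen S hclass, sub_zero]
      have hyk : ∀ k, y k = x k - ((if k = a then (1 : ℤ) else 0) - (if k = b then 1 else 0)) := by
        intro k
        simp [hy, hg, Pi.single_apply]
      have hle : ∀ k ∈ Finset.univ, (y k).natAbs ≤ (x k).natAbs := by
        intro k _
        rw [hyk k]
        split_ifs with h1 h2 h2 <;> [skip; skip; skip; omega] <;>
          first
          | (subst h1; omega)
          | (subst h2; omega)
      have hlt : (y a).natAbs < (x a).natAbs := by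
        rw [hyk a, if_pos rfl, if_neg hab]
        omega
      have hmeas : (∑ k, (y k).natAbs) < m := by
        rw [← hm]
        exact Finset.sum_lt_sum hle ⟨a, Finset.mem_univ a, hlt⟩
      have hymem := ih _ hmeas y rfl hyq
      have := add_mem hymem hgmem
      rwa [hy, sub_add_cancel] at this

/-- The linear functional on `ℚ^{n+1}` summing coordinates over the component `q`. -/
noncomputable def psi (S : Set (Fin (n + 1) → ℤ)) (q : Quot (adjRel S)) :
    (Fin (n + 1) → ℚ) →ₗ[ℚ] ℚ :=
  ∑ k ∈ classSet S q, (LinearMap.proj k : (Fin (n + 1) → ℚ) →ₗ[ℚ] ℚ)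

lemma psi_apply (S : Set (Fin (n + 1) → ℤ)) (q : Quot (adjRel S)) (y : Fin (n + 1) → ℚ) :
    psi S q y = ∑ k ∈ classSet S q, y k := by
  simp [psi]

lemma main (S : Set (Fin (n + 1) → ℤ))
    (hSΦ : ∀ v ∈ S, ∃ i j : Fin (n + 1), i ≠ j ∧ v = Pi.single i 1 - Pi.single j 1)
    (x : Fin (n + 1) → ℤ) :
    x ∈ AddSubgroup.closure S ↔
      (fun i => (x i : ℚ)) ∈
        Submodule.span ℚ ((fun (v : Fin (n + 1) → ℤ) (i : Fin (n + 1)) => (v i : ℚ)) '' S) := by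
  constructor
  · intro hx
    induction hx using AddSubgroup.closure_induction with
    | mem v hv => exact Submodule.subset_span ⟨v, hv, rfl⟩
    | zero =>
        have h0 : (fun i => (((0 : Fin (n + 1) → ℤ) i : ℤ) : ℚ)) = (0 : Fin (n + 1) → ℚ) := by
          funext i; simp
        rw [h0]; exact zero_mem _
    | add a b _ _ iha ihb =>
        have : (fun i => (((a + b) i : ℤ) : ℚ)) =
            (fun i => ((a i : ℤ) : ℚ)) + fun i => ((b i : ℤ) : ℚ) := by
          funext i; simp
        rw [this]; exact add_mem iha ihb
    | neg a _ iha =>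
        have : (fun i => (((-a) i : ℤ) : ℚ)) = -fun i => ((a i : ℤ) : ℚ) := by
          funext i; simp
        rw [this]; exact neg_mem iha
  · intro hx
    apply mem_closure_of_phi S _ x rfl
    intro q
    have hker : Submodule.span ℚ
        ((fun (v : Fin (n + 1) → ℤ) (i : Fin (n + 1)) => (v i : ℚ)) '' S) ≤
        LinearMap.ker (psi S q) := by
      rw [Submodule.span_le]
      rintro _ ⟨v, hv, rfl⟩
      obtain ⟨i, j, hij, rfl⟩ := hSΦ v hv
      have hclass : Quot.mk (adjRel S) i = Quot.mk (adjRel S) j := Quot.sound hv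
      have h0 : phi S (Pi.single i 1 - Pi.single j 1) q = 0 := phi_gen S hclass q
      simp only [SetLike.mem_coe, LinearMap.mem_ker, psi_apply]
      have : ∑ k ∈ classSet S q, (((Pi.single i 1 - Pi.single j 1 : Fin (n + 1) → ℤ) k : ℤ) : ℚ)
          = ((phi S (Pi.single i 1 - Pi.single j 1) q : ℤ) : ℚ) := by
        rw [phi]; push_cast; rfl
      rw [this, h0]; norm_num
    have hx0 := hker hx
    rw [LinearMap.mem_ker, psi_apply] at hx0
    have : ((phi S x q : ℤ) : ℚ) = 0 := by
      rw [phi]; push_cast; exact hx0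
    exact_mod_cast this

end Stmt12Aux

/-- For the root system `Aₙ` with roots `Φ = {eᵢ - eⱼ : i ≠ j} ⊆ ℤ^{n+1}`: for every
`S ⊆ Φ` the subgroup `ℤ⟨S⟩` is saturated, i.e. `ℤ⟨S⟩ = span_ℚ(S) ∩ ℤ^{n+1}` (expressed
here as: `x ∈ ℤ⟨S⟩` iff the image of `x` in `ℚ^{n+1}` lies in `span_ℚ(S)`).
Consequently, if two subsets `S, S' ⊆ Φ` have the same `ℚ`-span then they have the same
`ℤ`-span, so the map `τ : 𝒫(Aₙ) → 𝒜(Aₙ)`, `N ↦ N ⊗_ℤ ℚ`, is an isomorphism of posets. -/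
theorem stmt_12 (n : ℕ) (hn : 1 ≤ n)
    (Φ : Set (Fin (n + 1) → ℤ))
    (hΦ : Φ = {α | ∃ i j : Fin (n + 1), i ≠ j ∧ α = Pi.single i 1 - Pi.single j 1}) :
    (∀ S ⊆ Φ, ∀ x : Fin (n + 1) → ℤ,
      x ∈ AddSubgroup.closure S ↔
        (fun i => (x i : ℚ)) ∈
          Submodule.span ℚ ((fun (v : Fin (n + 1) → ℤ) (i : Fin (n + 1)) => (v i : ℚ)) '' S)) ∧
    (∀ S ⊆ Φ, ∀ S' ⊆ Φ,
      Submodule.span ℚ ((fun (v : Fin (n + 1) → ℤ) (i : Fin (n + 1)) => (v i : ℚ)) '' S) =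
        Submodule.span ℚ ((fun (v : Fin (n + 1) → ℤ) (i : Fin (n + 1)) => (v i : ℚ)) '' S') →
      AddSubgroup.closure S = AddSubgroup.closure S') := by
  subst hΦ
  have key : ∀ S ⊆ {α : Fin (n + 1) → ℤ |
      ∃ i j : Fin (n + 1), i ≠ j ∧ α = Pi.single i 1 - Pi.single j 1},
      ∀ x : Fin (n + 1) → ℤ,
      x ∈ AddSubgroup.closure S ↔
        (fun i => (x i : ℚ)) ∈
          Submodule.span ℚ ((fun (v : Fin (n + 1) → ℤ) (i : Fin (n + 1)) => (v i : ℚ)) '' S) := by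
    intro S hS x
    exact Stmt12Aux.main S (fun v hv => hS hv) x
  refine ⟨key, ?_⟩
  intro S hS S' hS' hspan
  ext x
  rw [key S hS x, key S' hS' x, hspan]
end
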